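/- arXiv:2008.09002 — 4 statements merged into one kernel-verified Lean document; each statement's English description precedes it below -/
import Mathlib

section
/- Let T be a tree with maximum degree at most 4 and no vertex of degree 2 that admits a convex rectilinear planar drawing. Then T has at most four vertices that are 2-forks or 3-forks; in particular, T does not contain five pairwise vertex-disjoint subtrees each of which contains a 2-fork or a 3-fork of T. -/
open SimpleGraph

namespace TurnRegular

/-- Degree of a vertex: the cardinality of its neighbor set. -/
noncomputable def deg {V : Type*} (G : SimpleGraph V) (v : V) : ℕ :=
  (G.neighborSet v).ncard

/-- A splitter: a vertex adjacent to at least three non-leaf vertices. -/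
def IsSplitter {V : Type*} (G : SimpleGraph V) (v : V) : Prop :=
  3 ≤ {u | G.Adj v u ∧ 2 ≤ deg G u}.ncard

/-- A `k`-fork: a vertex of degree exactly `k+1` adjacent to at least `k` leaves. -/
def IsKFork {V : Type*} (k : ℕ) (G : SimpleGraph V) (v : V) : Prop :=
  deg G v = k + 1 ∧ k ≤ {u | G.Adj v u ∧ deg G u = 1}.ncard

/-- A `k`-caterpillar: a tree with at least three vertices whose non-leaf vertices
form the vertex set of a path, every non-leaf vertex having degree between `3` and `k`. -/
def IsKCaterpillar (k : ℕ) {W : Type*} (G : SimpleGraph W) : Prop :=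
  G.IsTree ∧ 3 ≤ Nat.card W ∧
  (∃ (a b : W) (p : G.Walk a b), p.IsPath ∧ ∀ v, 2 ≤ deg G v ↔ v ∈ p.support) ∧
  (∀ v, 2 ≤ deg G v → 3 ≤ deg G v ∧ deg G v ≤ k)

/-- The vertex set of the connected component of `G - v` containing `u`
(for `u ≠ v`): all vertices reachable from `u` by a walk avoiding `v`. -/
def compAway {V : Type*} (G : SimpleGraph V) (v u : V) : Set V :=
  {w | ∃ p : G.Walk u w, v ∉ p.support}

/-- Vertex set of the branch of `G` at `v` through the component of `G - v`
containing `u`. -/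
def branchVerts {V : Type*} (G : SimpleGraph V) (v u : V) : Set V :=
  insert v (compAway G v u)

/-- The branch of `G` at `v` through the component of `G - v` containing `u`:
the subgraph induced on `{v} ∪ C`. -/
def branch {V : Type*} (G : SimpleGraph V) (v u : V) :
    SimpleGraph (branchVerts G v u) :=
  G.induce (branchVerts G v u)

/-- A 4-windmill: a tree of maximum degree at most 4 with exactly one splitter `v`,
such that `v` has degree 4 and each of the four branches at `v` is a 3-caterpillar. -/
def Is4Windmill {V : Type*} (G : SimpleGraph V) : Prop :=
  G.IsTree ∧ (∀ w, deg G w ≤ 4) ∧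
  ∃ v, (∀ w, IsSplitter G w ↔ w = v) ∧ deg G v = 4 ∧
    ∀ u, G.Adj v u → IsKCaterpillar 3 (branch G v u)

/-- A 3-windmill: a tree of maximum degree at most 4 with exactly one splitter `v`,
such that `v` has exactly three non-leaf neighbors, every other neighbor of `v`
is a leaf, and among the three branches at `v` through the components containing
the non-leaf neighbors, two are 3-caterpillars and one is a 4-caterpillar. -/
def Is3Windmill {V : Type*} (G : SimpleGraph V) : Prop :=
  G.IsTree ∧ (∀ w, deg G w ≤ 4) ∧
  ∃ v, (∀ w, IsSplitter G w ↔ w = v) ∧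
    ∃ u₁ u₂ u₃, u₁ ≠ u₂ ∧ u₁ ≠ u₃ ∧ u₂ ≠ u₃ ∧
      G.Adj v u₁ ∧ G.Adj v u₂ ∧ G.Adj v u₃ ∧
      2 ≤ deg G u₁ ∧ 2 ≤ deg G u₂ ∧ 2 ≤ deg G u₃ ∧
      (∀ u, G.Adj v u → 2 ≤ deg G u → u = u₁ ∨ u = u₂ ∨ u = u₃) ∧
      (∀ u, G.Adj v u → u ≠ u₁ → u ≠ u₂ → u ≠ u₃ → deg G u = 1) ∧
      IsKCaterpillar 3 (branch G v u₁) ∧ IsKCaterpillar 3 (branch G v u₂) ∧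
      IsKCaterpillar 4 (branch G v u₃)

/-- A double-windmill: a tree of maximum degree at most 4 with exactly two
splitters `u` and `v` such that (i) every vertex strictly between `u` and `v`
on the `u`–`v` path is adjacent, apart from its neighbors on the path, only
to leaves; (ii) each of `u` and `v` has exactly three non-leaf neighbors and
every other neighbor is a leaf; (iii) for each of `u` and `v`, the two branches
at it through the components that contain one of its non-leaf neighbors but not
the other splitter are 3-caterpillars. -/
def IsDoubleWindmill {V : Type*} (G : SimpleGraph V) : Prop :=
  G.IsTree ∧ (∀ w, deg G w ≤ 4) ∧
  ∃ u v, u ≠ v ∧ (∀ w, IsSplitter G w ↔ (w = u ∨ w = v)) ∧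
    (∀ p : G.Walk u v, p.IsPath →
      ∀ w ∈ p.support, w ≠ u → w ≠ v →
        ∀ x, G.Adj w x → x ∉ p.support → deg G x = 1) ∧
    {x | G.Adj u x ∧ 2 ≤ deg G x}.ncard = 3 ∧
    {x | G.Adj v x ∧ 2 ≤ deg G x}.ncard = 3 ∧
    (∀ x, G.Adj u x → deg G x = 1 ∨ 2 ≤ deg G x) ∧
    (∀ x, G.Adj v x → deg G x = 1 ∨ 2 ≤ deg G x) ∧
    (∀ x, G.Adj u x → 2 ≤ deg G x → v ∉ branchVerts G u x →
      IsKCaterpillar 3 (branch G u x)) ∧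
    (∀ x, G.Adj v x → 2 ≤ deg G x → u ∉ branchVerts G v x →
      IsKCaterpillar 3 (branch G v x))

/-- The closed axis-parallel ray starting at `p` and passing through `q`
(extended to infinity beyond `q`). -/
def ray (p q : ℝ × ℝ) : Set (ℝ × ℝ) :=
  {x | ∃ t : ℝ, 0 ≤ t ∧ x = p + t • (q - p)}

/-- A rectilinear planar drawing of `G`: an injective placement of the vertices
in the plane such that each edge is a horizontal or vertical segment, and the
segments of two distinct edges meet at most in the image of a common endpoint. -/
def IsRectDrawing {V : Type*} (G : SimpleGraph V) (Γ : V → ℝ × ℝ) : Prop :=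
  Function.Injective Γ ∧
  (∀ u v, G.Adj u v → (Γ u).1 = (Γ v).1 ∨ (Γ u).2 = (Γ v).2) ∧
  (∀ u v x y, G.Adj u v → G.Adj x y → s(u, v) ≠ s(x, y) →
    ∀ p ∈ segment ℝ (Γ u) (Γ v) ∩ segment ℝ (Γ x) (Γ y),
      ∃ w, (w = u ∨ w = v) ∧ (w = x ∨ w = y) ∧ p = Γ w)

/-- The drawn point set of edge `{a, b}` in the drawing `Γ`: its segment, where
the edge is extended beyond each leaf endpoint to an infinite axis-parallel ray. -/
noncomputable def edgeDrawn {V : Type*} (G : SimpleGraph V) (Γ : V → ℝ × ℝ)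
    (a b : V) : Set (ℝ × ℝ) :=
  (if deg G b = 1 then ray (Γ a) (Γ b) else segment ℝ (Γ a) (Γ b)) ∪
  (if deg G a = 1 then ray (Γ b) (Γ a) else segment ℝ (Γ a) (Γ b))

/-- A convex rectilinear planar drawing: a rectilinear planar drawing in which,
after extending every edge incident to a leaf beyond that leaf to an infinite
axis-parallel ray, the resulting point sets of two distinct edges still meet at
most in the image of a common endpoint. -/
def IsConvexRectDrawing {V : Type*} (G : SimpleGraph V) (Γ : V → ℝ × ℝ) : Prop :=
  IsRectDrawing G Γ ∧
  (∀ u v x y, G.Adj u v → G.Adj x y → s(u, v) ≠ s(x, y) →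
    ∀ p ∈ edgeDrawn G Γ u v ∩ edgeDrawn G Γ x y,
      ∃ w, (w = u ∨ w = v) ∧ (w = x ∨ w = y) ∧ p = Γ w)

/-- `G` admits a convex rectilinear planar drawing. -/
def HasConvexDrawing {V : Type*} (G : SimpleGraph V) : Prop :=
  ∃ Γ : V → ℝ × ℝ, IsConvexRectDrawing G Γ

section Geom

lemma pm_sq {ε : ℝ} (hε : ε = 1 ∨ ε = -1) : ε * ε = 1 := by
  rcases hε with rfl | rfl <;> norm_num

lemma segment_subset_ray (p q : ℝ × ℝ) : segment ℝ p q ⊆ ray p q := by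
  rintro x ⟨u, v, hu, hv, huv, rfl⟩
  refine ⟨v, hv, ?_⟩
  have : u = 1 - v := by linarith
  subst this
  module

lemma mem_ray_horiz {p q : ℝ × ℝ} (h2 : q.2 = p.2) (hne : q.1 ≠ p.1) {z : ℝ}
    (hz : 0 ≤ (q.1 - p.1) * (z - p.1)) : (z, p.2) ∈ ray p q := by
  have hd : q.1 - p.1 ≠ 0 := sub_ne_zero.mpr hne
  refine ⟨(z - p.1) / (q.1 - p.1), ?_, ?_⟩
  · rw [div_nonneg_iff]
    rcases lt_or_gt_of_ne hd with h | h
    · right; constructor <;> nlinarith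
    · left; constructor <;> nlinarith
  · have : (p + ((z - p.1) / (q.1 - p.1)) • (q - p)) =
        (p.1 + (z - p.1) / (q.1 - p.1) * (q.1 - p.1), p.2 + (z - p.1) / (q.1 - p.1) * (q.2 - p.2)) := rfl
    rw [this, Prod.ext_iff]
    constructor
    · field_simp; ring
    · simp [h2]

lemma mem_ray_vert {p q : ℝ × ℝ} (h1 : q.1 = p.1) (hne : q.2 ≠ p.2) {z : ℝ}
    (hz : 0 ≤ (q.2 - p.2) * (z - p.2)) : (p.1, z) ∈ ray p q := by
  have hd : q.2 - p.2 ≠ 0 := sub_ne_zero.mpr hne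
  refine ⟨(z - p.2) / (q.2 - p.2), ?_, ?_⟩
  · rw [div_nonneg_iff]
    rcases lt_or_gt_of_ne hd with h | h
    · right; constructor <;> nlinarith
    · left; constructor <;> nlinarith
  · have : (p + ((z - p.2) / (q.2 - p.2)) • (q - p)) =
        (p.1 + (z - p.2) / (q.2 - p.2) * (q.1 - p.1), p.2 + (z - p.2) / (q.2 - p.2) * (q.2 - p.2)) := rfl
    rw [this, Prod.ext_iff]
    constructor
    · simp [h1]
    · field_simp; ring

lemma mem_seg_horiz {p q : ℝ × ℝ} (h2 : q.2 = p.2) {z : ℝ}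
    (hz : (p.1 - z) * (q.1 - z) ≤ 0) : (z, p.2) ∈ segment ℝ p q := by
  have hz' : z ∈ segment ℝ p.1 q.1 := by
    rw [segment_eq_uIcc, Set.mem_uIcc]
    rcases mul_nonpos_iff.mp hz with ⟨ha, hb⟩ | ⟨ha, hb⟩
    · right; constructor <;> linarith
    · left; constructor <;> linarith
  obtain ⟨u, v, hu, hv, huv, hzz⟩ := hz'
  refine ⟨u, v, hu, hv, huv, ?_⟩
  have hc : (u • p + v • q : ℝ × ℝ) = (u * p.1 + v * q.1, u * p.2 + v * q.2) := rfl
  rw [hc, Prod.ext_iff]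
  constructor
  · simpa using hzz
  · show u * p.2 + v * q.2 = p.2
    rw [h2]; linear_combination p.2 * huv

lemma mem_seg_vert {p q : ℝ × ℝ} (h1 : q.1 = p.1) {z : ℝ}
    (hz : (p.2 - z) * (q.2 - z) ≤ 0) : (p.1, z) ∈ segment ℝ p q := by
  have hz' : z ∈ segment ℝ p.2 q.2 := by
    rw [segment_eq_uIcc, Set.mem_uIcc]
    rcases mul_nonpos_iff.mp hz with ⟨ha, hb⟩ | ⟨ha, hb⟩
    · right; constructor <;> linarith
    · left; constructor <;> linarith
  obtain ⟨u, v, hu, hv, huv, hzz⟩ := hz'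
  refine ⟨u, v, hu, hv, huv, ?_⟩
  have hc : (u • p + v • q : ℝ × ℝ) = (u * p.1 + v * q.1, u * p.2 + v * q.2) := rfl
  rw [hc, Prod.ext_iff]
  constructor
  · show u * p.1 + v * q.1 = p.1
    rw [h1]; linear_combination p.1 * huv
  · simpa using hzz

lemma pm_mul_pos {e X Y : ℝ} (he : e = 1 ∨ e = -1) (h : 0 < (e*X)*(e*Y)) : 0 < X*Y := by
  rcases he with rfl | rfl <;> nlinarith

lemma pm_mul_nonpos {e X Y : ℝ} (he : e = 1 ∨ e = -1) (h : (e*X)*(e*Y) ≤ 0) : X*Y ≤ 0 := by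
  rcases he with rfl | rfl <;> nlinarith

lemma neg_flip {e X : ℝ} (h : e * X < 0) : 0 < e * (-X) := by nlinarith

end Geom

section Graph

variable {V : Type*} {G : SimpleGraph V} {Γ : V → ℝ × ℝ}

lemma leaf_unique_nbr {a u v : V} (ha : deg G a = 1) (h1 : G.Adj a u) (h2 : G.Adj a v) : u = v := by
  obtain ⟨x, hx⟩ := Set.ncard_eq_one.mp ha
  have hu : u ∈ G.neighborSet a := h1
  have hv : v ∈ G.neighborSet a := h2
  rw [hx] at hu hv
  simp at hu hv; rw [hu, hv]

lemma two_le_deg {v a b : V} (hva : G.Adj v a) (hvb : G.Adj v b) (hab : a ≠ b) [Finite V] :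
    2 ≤ deg G v := by
  have h : ({a, b} : Set V) ⊆ G.neighborSet v := by
    intro x hx; rcases hx with rfl | hx
    · exact hva
    · simp at hx; subst hx; exact hvb
  calc 2 = ({a, b} : Set V).ncard := (Set.ncard_pair hab).symm
    _ ≤ _ := Set.ncard_le_ncard h (Set.toFinite _)

lemma seg_sub_edgeDrawn (a b : V) : segment ℝ (Γ a) (Γ b) ⊆ edgeDrawn G Γ a b := by
  intro x hx
  unfold edgeDrawn
  split_ifs with h1 h2 h2
  · exact Set.mem_union_left _ (segment_subset_ray _ _ hx)
  · exact Set.mem_union_left _ (segment_subset_ray _ _ hx)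
  · exact Set.mem_union_left _ hx
  · exact Set.mem_union_left _ hx

lemma ray_sub_edgeDrawn {a b : V} (hb : deg G b = 1) : ray (Γ a) (Γ b) ⊆ edgeDrawn G Γ a b := by
  intro x hx
  unfold edgeDrawn
  rw [if_pos hb]
  exact Set.mem_union_left _ hx

/-- Two edges with no common endpoint have disjoint drawn sets. -/
lemma no_cross (hconv : IsConvexRectDrawing G Γ) {u v x y : V}
    (huv : G.Adj u v) (hxy : G.Adj x y)
    (h1 : u ≠ x) (h2 : u ≠ y) (h3 : v ≠ x) (h4 : v ≠ y) {p : ℝ × ℝ}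
    (hp1 : p ∈ edgeDrawn G Γ u v) (hp2 : p ∈ edgeDrawn G Γ x y) : False := by
  have hs : s(u, v) ≠ s(x, y) := by
    intro hss; rw [Sym2.eq_iff] at hss; rcases hss with ⟨rfl, rfl⟩ | ⟨rfl, rfl⟩
    · exact h1 rfl
    · exact h2 rfl
  obtain ⟨w, hw1, hw2, -⟩ := hconv.2 u v x y huv hxy hs p ⟨hp1, hp2⟩
  rcases hw1 with rfl | rfl <;> rcases hw2 with rfl | rfl
  · exact h1 rfl
  · exact h2 rfl
  · exact h3 rfl
  · exact h4 rfl

/-- Two edges sharing exactly the endpoint `v` meet only at `Γ v`. -/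
lemma cross_shared (hconv : IsConvexRectDrawing G Γ) {v a b : V}
    (hva : G.Adj v a) (hvb : G.Adj v b) (hab : a ≠ b) {p : ℝ × ℝ}
    (hp1 : p ∈ edgeDrawn G Γ v a) (hp2 : p ∈ edgeDrawn G Γ v b) : p = Γ v := by
  have hs : s(v, a) ≠ s(v, b) := by
    intro hss; rw [Sym2.eq_iff] at hss; rcases hss with ⟨-, rfl⟩ | ⟨rfl, rfl⟩
    · exact hab rfl
    · exact hab rfl
  obtain ⟨w, hw1, hw2, hp⟩ := hconv.2 v a v b hva hvb hs p ⟨hp1, hp2⟩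
  rcases hw1 with rfl | rfl
  · exact hp
  · rcases hw2 with h | h
    · exact ((G.ne_of_adj hva) h.symm).elim
    · exact (hab h).elim

/-- Every edge is horizontal or vertical, with distinct endpoints. -/
lemma adj_dir (hconv : IsConvexRectDrawing G Γ) {v x : V} (h : G.Adj v x) :
    ((Γ x).2 = (Γ v).2 ∧ (Γ x).1 ≠ (Γ v).1) ∨ ((Γ x).1 = (Γ v).1 ∧ (Γ x).2 ≠ (Γ v).2) := by
  have hne : Γ x ≠ Γ v := fun he => (G.ne_of_adj h) (hconv.1.1 he).symm
  rcases hconv.1.2.1 v x h with h1 | h2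
  · right; exact ⟨h1.symm, fun hc => hne (Prod.ext h1.symm hc)⟩
  · left; exact ⟨h2.symm, fun hc => hne (Prod.ext hc h2.symm)⟩

lemma adj_dir' (hconv : IsConvexRectDrawing G Γ) {v x : V} (h : G.Adj v x) :
    (∃ ε : ℝ, (ε = 1 ∨ ε = -1) ∧ (Γ x).2 = (Γ v).2 ∧ 0 < ε * ((Γ x).1 - (Γ v).1)) ∨
    (∃ δ : ℝ, (δ = 1 ∨ δ = -1) ∧ (Γ x).1 = (Γ v).1 ∧ 0 < δ * ((Γ x).2 - (Γ v).2)) := by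
  rcases adj_dir hconv h with ⟨he, hne⟩ | ⟨he, hne⟩
  · left
    rcases lt_or_gt_of_ne hne with hlt | hgt
    · exact ⟨-1, Or.inr rfl, he, by nlinarith⟩
    · exact ⟨1, Or.inl rfl, he, by nlinarith⟩
  · right
    rcases lt_or_gt_of_ne hne with hlt | hgt
    · exact ⟨-1, Or.inr rfl, he, by nlinarith⟩
    · exact ⟨1, Or.inl rfl, he, by nlinarith⟩

end Graph

section B5

variable {V : Type*} {G : SimpleGraph V} {Γ : V → ℝ × ℝ}

private lemma not_same_dir_h_aux (hconv : IsConvexRectDrawing G Γ) {v a b : V}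
    (hva : G.Adj v a) (hvb : G.Adj v b) (hab : a ≠ b) {ε : ℝ} (hε : ε = 1 ∨ ε = -1)
    (h2a : (Γ a).2 = (Γ v).2) (hsa : 0 < ε * ((Γ a).1 - (Γ v).1))
    (h2b : (Γ b).2 = (Γ v).2) (hsb : 0 < ε * ((Γ b).1 - (Γ v).1))
    (hle : ε * (Γ a).1 ≤ ε * (Γ b).1) : False := by
  have hmem : ((Γ a).1, (Γ v).2) ∈ segment ℝ (Γ v) (Γ b) := by
    apply mem_seg_horiz h2b
    have he := pm_sq hε
    nlinarith
  have hpa : ((Γ a).1, (Γ v).2) = Γ a := Prod.ext rfl h2a.symm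
  rw [hpa] at hmem
  have h1 : Γ a ∈ edgeDrawn G Γ v a := seg_sub_edgeDrawn v a (right_mem_segment ℝ _ _)
  have h2 : Γ a ∈ edgeDrawn G Γ v b := seg_sub_edgeDrawn v b hmem
  have := cross_shared hconv hva hvb hab h1 h2
  rw [this] at hsa
  simp at hsa

lemma not_same_dir_h (hconv : IsConvexRectDrawing G Γ) {v a b : V}
    (hva : G.Adj v a) (hvb : G.Adj v b) (hab : a ≠ b) {ε : ℝ} (hε : ε = 1 ∨ ε = -1)
    (h2a : (Γ a).2 = (Γ v).2) (hsa : 0 < ε * ((Γ a).1 - (Γ v).1))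
    (h2b : (Γ b).2 = (Γ v).2) (hsb : 0 < ε * ((Γ b).1 - (Γ v).1)) : False := by
  rcases le_total (ε * (Γ a).1) (ε * (Γ b).1) with h | h
  · exact not_same_dir_h_aux hconv hva hvb hab hε h2a hsa h2b hsb h
  · exact not_same_dir_h_aux hconv hvb hva hab.symm hε h2b hsb h2a hsa h

private lemma not_same_dir_v_aux (hconv : IsConvexRectDrawing G Γ) {v a b : V}
    (hva : G.Adj v a) (hvb : G.Adj v b) (hab : a ≠ b) {δ : ℝ} (hδ : δ = 1 ∨ δ = -1)
    (h1a : (Γ a).1 = (Γ v).1) (hsa : 0 < δ * ((Γ a).2 - (Γ v).2))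
    (h1b : (Γ b).1 = (Γ v).1) (hsb : 0 < δ * ((Γ b).2 - (Γ v).2))
    (hle : δ * (Γ a).2 ≤ δ * (Γ b).2) : False := by
  have hmem : ((Γ v).1, (Γ a).2) ∈ segment ℝ (Γ v) (Γ b) := by
    apply mem_seg_vert h1b
    have he := pm_sq hδ
    nlinarith
  have hpa : ((Γ v).1, (Γ a).2) = Γ a := Prod.ext h1a.symm rfl
  rw [hpa] at hmem
  have h1 : Γ a ∈ edgeDrawn G Γ v a := seg_sub_edgeDrawn v a (right_mem_segment ℝ _ _)
  have h2 : Γ a ∈ edgeDrawn G Γ v b := seg_sub_edgeDrawn v b hmem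
  have := cross_shared hconv hva hvb hab h1 h2
  rw [this] at hsa
  simp at hsa

lemma not_same_dir_v (hconv : IsConvexRectDrawing G Γ) {v a b : V}
    (hva : G.Adj v a) (hvb : G.Adj v b) (hab : a ≠ b) {δ : ℝ} (hδ : δ = 1 ∨ δ = -1)
    (h1a : (Γ a).1 = (Γ v).1) (hsa : 0 < δ * ((Γ a).2 - (Γ v).2))
    (h1b : (Γ b).1 = (Γ v).1) (hsb : 0 < δ * ((Γ b).2 - (Γ v).2)) : False := by
  rcases le_total (δ * (Γ a).2) (δ * (Γ b).2) with h | h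
  · exact not_same_dir_v_aux hconv hva hvb hab hδ h1a hsa h1b hsb h
  · exact not_same_dir_v_aux hconv hvb hva hab.symm hδ h1b hsb h1a hsa h

end B5

section Quad

variable {V : Type*} {G : SimpleGraph V} {Γ : V → ℝ × ℝ}

private lemma quad_empty_key (hconv : IsConvexRectDrawing G Γ) {a b : V} {ε δ : ℝ}
    (hε : ε = 1 ∨ ε = -1) (hδ : δ = 1 ∨ δ = -1)
    (hla : deg G a = 1) (hlb : deg G b = 1) {v x : V} (w : G.Walk x v) :
    G.Adj v a → (Γ a).2 = (Γ v).2 → 0 < ε * ((Γ a).1 - (Γ v).1) →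
    G.Adj v b → (Γ b).1 = (Γ v).1 → 0 < δ * ((Γ b).2 - (Γ v).2) →
    ¬(0 < ε * ((Γ x).1 - (Γ v).1) ∧ 0 < δ * ((Γ x).2 - (Γ v).2)) := by
  have hee := pm_sq hε
  have hdd := pm_sq hδ
  induction w with
  | nil => rintro _ _ _ _ _ _ ⟨h1, -⟩; simp at h1
  | @cons x' y' v' hadj w' ih =>
    intro hva h2a hsa hvb h1b hsb
    rintro ⟨hx1, hx2⟩
    by_cases hyv : y' = v'
    · subst hyv
      rcases adj_dir hconv hadj.symm with ⟨he, -⟩ | ⟨he, -⟩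
      · rw [he] at hx2; simp at hx2
      · rw [he] at hx1; simp at hx1
    by_cases hya : y' = a
    · subst hya
      have hxv : x' = v' := leaf_unique_nbr hla hadj.symm hva.symm
      subst hxv; simp at hx1
    by_cases hyb : y' = b
    · subst hyb
      have hxv : x' = v' := leaf_unique_nbr hlb hadj.symm hvb.symm
      subst hxv; simp at hx1
    have hy := ih hva h2a hsa hvb h1b hsb
    have hxv : x' ≠ v' := by rintro rfl; simp at hx1
    have hxa : x' ≠ a := by rintro rfl; rw [h2a] at hx2; simp at hx2
    have hxb : x' ≠ b := by rintro rfl; rw [h1b] at hx1; simp at hx1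
    rcases adj_dir hconv hadj with ⟨he, -⟩ | ⟨he, -⟩
    · have hy2 : 0 < δ * ((Γ y').2 - (Γ v').2) := by rw [he]; exact hx2
      have hy1 : ε * ((Γ y').1 - (Γ v').1) ≤ 0 := by
        by_contra hc; push_neg at hc; exact hy ⟨hc, hy2⟩
      have hmul : (ε * ((Γ x').1 - (Γ v').1)) * (ε * ((Γ y').1 - (Γ v').1)) ≤ 0 :=
        mul_nonpos_of_nonneg_of_nonpos (le_of_lt hx1) hy1
      have hseg : ((Γ v').1, (Γ x').2) ∈ segment ℝ (Γ x') (Γ y') :=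
        mem_seg_horiz he (by nlinarith [hmul, hee])
      have hray : ((Γ v').1, (Γ x').2) ∈ ray (Γ v') (Γ b) := by
        have hbne : (Γ b).2 ≠ (Γ v').2 := by
          intro hc; rw [hc] at hsb; simp at hsb
        have hmul2 : 0 ≤ (δ * ((Γ b).2 - (Γ v').2)) * (δ * ((Γ x').2 - (Γ v').2)) :=
          le_of_lt (mul_pos hsb hx2)
        exact mem_ray_vert h1b hbne (by nlinarith [hmul2, hdd])
      exact no_cross hconv hadj hvb hxv hxb hyv hyb
        (seg_sub_edgeDrawn x' y' hseg) (ray_sub_edgeDrawn hlb hray)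
    · have hy1 : 0 < ε * ((Γ y').1 - (Γ v').1) := by rw [he]; exact hx1
      have hy2 : δ * ((Γ y').2 - (Γ v').2) ≤ 0 := by
        by_contra hc; push_neg at hc; exact hy ⟨hy1, hc⟩
      have hmul : (δ * ((Γ x').2 - (Γ v').2)) * (δ * ((Γ y').2 - (Γ v').2)) ≤ 0 :=
        mul_nonpos_of_nonneg_of_nonpos (le_of_lt hx2) hy2
      have hseg : ((Γ x').1, (Γ v').2) ∈ segment ℝ (Γ x') (Γ y') :=
        mem_seg_vert he (by nlinarith [hmul, hdd])
      have hray : ((Γ x').1, (Γ v').2) ∈ ray (Γ v') (Γ a) := by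
        have hane : (Γ a).1 ≠ (Γ v').1 := by
          intro hc; rw [hc] at hsa; simp at hsa
        have hmul2 : 0 ≤ (ε * ((Γ a).1 - (Γ v').1)) * (ε * ((Γ x').1 - (Γ v').1)) :=
          le_of_lt (mul_pos hsa hx1)
        exact mem_ray_horiz h2a hane (by nlinarith [hmul2, hee])
      exact no_cross hconv hadj hva hxv hxa hyv hya
        (seg_sub_edgeDrawn x' y' hseg) (ray_sub_edgeDrawn hla hray)

/-- The open quadrant spanned by the two leaf rays at a fork contains no vertex. -/
lemma quad_empty (hconv : IsConvexRectDrawing G Γ) (hcon : G.Connected)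
    {v a b : V} {ε δ : ℝ} (hε : ε = 1 ∨ ε = -1) (hδ : δ = 1 ∨ δ = -1)
    (hva : G.Adj v a) (hla : deg G a = 1) (h2a : (Γ a).2 = (Γ v).2)
    (hsa : 0 < ε * ((Γ a).1 - (Γ v).1))
    (hvb : G.Adj v b) (hlb : deg G b = 1) (h1b : (Γ b).1 = (Γ v).1)
    (hsb : 0 < δ * ((Γ b).2 - (Γ v).2)) (x : V) :
    ¬(0 < ε * ((Γ x).1 - (Γ v).1) ∧ 0 < δ * ((Γ x).2 - (Γ v).2)) :=
  quad_empty_key hconv hε hδ hla hlb ((hcon.preconnected x v).some)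
    hva h2a hsa hvb h1b hsb

end Quad

section K1

variable {V : Type*} [Finite V] {G : SimpleGraph V} {Γ : V → ℝ × ℝ}

/-- No two distinct forks can have quadrant ray-pairs of the same orientation. -/
lemma quad_unique (hconv : IsConvexRectDrawing G Γ) (hcon : G.Connected)
    {v u a b a' b' : V} {ε δ : ℝ} (hε : ε = 1 ∨ ε = -1) (hδ : δ = 1 ∨ δ = -1)
    (hvu : v ≠ u)
    (hva : G.Adj v a) (hla : deg G a = 1) (h2a : (Γ a).2 = (Γ v).2)
    (hsa : 0 < ε * ((Γ a).1 - (Γ v).1))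
    (hvb : G.Adj v b) (hlb : deg G b = 1) (h1b : (Γ b).1 = (Γ v).1)
    (hsb : 0 < δ * ((Γ b).2 - (Γ v).2))
    (hua : G.Adj u a') (hla' : deg G a' = 1) (h2a' : (Γ a').2 = (Γ u).2)
    (hsa' : 0 < ε * ((Γ a').1 - (Γ u).1))
    (hub : G.Adj u b') (hlb' : deg G b' = 1) (h1b' : (Γ b').1 = (Γ u).1)
    (hsb' : 0 < δ * ((Γ b').2 - (Γ u).2)) : False := by
  have hee := pm_sq hε
  have hdd := pm_sq hδ
  have hdegv : 2 ≤ deg G v := two_le_deg hva hvb (by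
    rintro rfl
    rw [h1b] at hsa; simp at hsa)
  have hdegu : 2 ≤ deg G u := two_le_deg hua hub (by
    rintro rfl
    rw [h1b'] at hsa'; simp at hsa')
  -- endpoint distinctness facts
  have hva' : v ≠ a' := by rintro rfl; rw [hla'] at hdegv; omega
  have hvb' : v ≠ b' := by rintro rfl; rw [hlb'] at hdegv; omega
  have hau : a ≠ u := by rintro rfl; rw [hla] at hdegu; omega
  have hbu : b ≠ u := by rintro rfl; rw [hlb] at hdegu; omega
  have haa' : a ≠ a' := by rintro rfl; exact hvu (leaf_unique_nbr hla hva.symm hua.symm)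
  have hab' : a ≠ b' := by rintro rfl; exact hvu (leaf_unique_nbr hla hva.symm hub.symm)
  have hba' : b ≠ a' := by rintro rfl; exact hvu (leaf_unique_nbr hlb hvb.symm hua.symm)
  have hbb' : b ≠ b' := by rintro rfl; exact hvu (leaf_unique_nbr hlb hvb.symm hub.symm)
  have hane : (Γ a).1 ≠ (Γ v).1 := fun hc => by rw [hc] at hsa; simp at hsa
  have hbne : (Γ b).2 ≠ (Γ v).2 := fun hc => by rw [hc] at hsb; simp at hsb
  have hane' : (Γ a').1 ≠ (Γ u).1 := fun hc => by rw [hc] at hsa'; simp at hsa'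
  have hbne' : (Γ b').2 ≠ (Γ u).2 := fun hc => by rw [hc] at hsb'; simp at hsb'
  by_cases h1 : (Γ u).1 = (Γ v).1
  · -- the two vertical rays lie on the same vertical line and point the same way
    rcases hδ with rfl | rfl
    · set z := max (Γ v).2 (Γ u).2 + 1 with hz
      have hm1 : ((Γ v).1, z) ∈ ray (Γ v) (Γ b) := by
        apply mem_ray_vert h1b hbne
        have := le_max_left (Γ v).2 (Γ u).2; nlinarith
      have hm2 : ((Γ u).1, z) ∈ ray (Γ u) (Γ b') := by
        apply mem_ray_vert h1b' hbne'
        have := le_max_right (Γ v).2 (Γ u).2; nlinarith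
      rw [h1] at hm2
      exact no_cross hconv hvb hub hvu hvb' hbu hbb'
        (ray_sub_edgeDrawn hlb hm1) (ray_sub_edgeDrawn hlb' hm2)
    · set z := min (Γ v).2 (Γ u).2 - 1 with hz
      have hm1 : ((Γ v).1, z) ∈ ray (Γ v) (Γ b) := by
        apply mem_ray_vert h1b hbne
        have := min_le_left (Γ v).2 (Γ u).2; nlinarith
      have hm2 : ((Γ u).1, z) ∈ ray (Γ u) (Γ b') := by
        apply mem_ray_vert h1b' hbne'
        have := min_le_right (Γ v).2 (Γ u).2; nlinarith
      rw [h1] at hm2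
      exact no_cross hconv hvb hub hvu hvb' hbu hbb'
        (ray_sub_edgeDrawn hlb hm1) (ray_sub_edgeDrawn hlb' hm2)
  by_cases h2 : (Γ u).2 = (Γ v).2
  · rcases hε with rfl | rfl
    · set z := max (Γ v).1 (Γ u).1 + 1 with hz
      have hm1 : (z, (Γ v).2) ∈ ray (Γ v) (Γ a) := by
        apply mem_ray_horiz h2a hane
        have := le_max_left (Γ v).1 (Γ u).1; nlinarith
      have hm2 : (z, (Γ u).2) ∈ ray (Γ u) (Γ a') := by
        apply mem_ray_horiz h2a' hane'
        have := le_max_right (Γ v).1 (Γ u).1; nlinarith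
      rw [h2] at hm2
      exact no_cross hconv hva hua hvu hva' hau haa'
        (ray_sub_edgeDrawn hla hm1) (ray_sub_edgeDrawn hla' hm2)
    · set z := min (Γ v).1 (Γ u).1 - 1 with hz
      have hm1 : (z, (Γ v).2) ∈ ray (Γ v) (Γ a) := by
        apply mem_ray_horiz h2a hane
        have := min_le_left (Γ v).1 (Γ u).1; nlinarith
      have hm2 : (z, (Γ u).2) ∈ ray (Γ u) (Γ a') := by
        apply mem_ray_horiz h2a' hane'
        have := min_le_right (Γ v).1 (Γ u).1; nlinarith
      rw [h2] at hm2
      exact no_cross hconv hva hua hvu hva' hau haa'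
        (ray_sub_edgeDrawn hla hm1) (ray_sub_edgeDrawn hla' hm2)
  -- generic position
  have Hv := quad_empty hconv hcon hε hδ hva hla h2a hsa hvb hlb h1b hsb u
  have Hu := quad_empty hconv hcon hε hδ hua hla' h2a' hsa' hub hlb' h1b' hsb' v
  have hε0 : ε ≠ 0 := by rcases hε with rfl | rfl <;> norm_num
  have hδ0 : δ ≠ 0 := by rcases hδ with rfl | rfl <;> norm_num
  have hA : ε * ((Γ u).1 - (Γ v).1) ≠ 0 := mul_ne_zero hε0 (sub_ne_zero.mpr h1)
  have hB : δ * ((Γ u).2 - (Γ v).2) ≠ 0 := mul_ne_zero hδ0 (sub_ne_zero.mpr h2)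
  rcases lt_or_gt_of_ne hA with hc | hc
  · -- u is on the -ε side of v, hence v is on the ε side of u
    have hc' : 0 < ε * ((Γ v).1 - (Γ u).1) := by
      have h := neg_flip hc; rw [neg_sub] at h; exact h
    have hd' : δ * ((Γ v).2 - (Γ u).2) ≤ 0 := by
      by_contra hcc; push_neg at hcc; exact Hu ⟨hc', hcc⟩
    have hd'' : 0 < δ * ((Γ u).2 - (Γ v).2) := by
      rcases lt_or_eq_of_le hd' with hlt | heq
      · have h := neg_flip hlt; rw [neg_sub] at h; exact h
      · exact absurd (by linear_combination -heq : δ * ((Γ u).2 - (Γ v).2) = 0) hB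
    -- crossing point ((Γ v).1, (Γ u).2) lies on the horizontal ray of u and vertical ray of v
    have hm1 : ((Γ v).1, (Γ u).2) ∈ ray (Γ u) (Γ a') := by
      apply mem_ray_horiz h2a' hane'
      exact le_of_lt (pm_mul_pos hε (mul_pos hsa' hc'))
    have hm2 : ((Γ v).1, (Γ u).2) ∈ ray (Γ v) (Γ b) := by
      apply mem_ray_vert h1b hbne
      exact le_of_lt (pm_mul_pos hδ (mul_pos hsb hd''))
    exact no_cross hconv hua hvb hvu.symm hbu.symm hva'.symm hba'.symm
      (ray_sub_edgeDrawn hla' hm1) (ray_sub_edgeDrawn hlb hm2)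
  · -- u is on the ε side of v
    have hd' : δ * ((Γ u).2 - (Γ v).2) ≤ 0 := by
      by_contra hcc; push_neg at hcc; exact Hv ⟨hc, hcc⟩
    have hd'' : 0 < δ * ((Γ v).2 - (Γ u).2) := by
      rcases lt_or_eq_of_le hd' with hlt | heq
      · have h := neg_flip hlt; rw [neg_sub] at h; exact h
      · exact absurd heq hB
    have hm1 : ((Γ u).1, (Γ v).2) ∈ ray (Γ v) (Γ a) := by
      apply mem_ray_horiz h2a hane
      exact le_of_lt (pm_mul_pos hε (mul_pos hsa hc))
    have hm2 : ((Γ u).1, (Γ v).2) ∈ ray (Γ u) (Γ b') := by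
      apply mem_ray_vert h1b' hbne'
      exact le_of_lt (pm_mul_pos hδ (mul_pos hsb' hd''))
    exact no_cross hconv hva hub hvu hvb' hau hab'
      (ray_sub_edgeDrawn hla hm1) (ray_sub_edgeDrawn hlb' hm2)

end K1

section Line

variable {V : Type*} {G : SimpleGraph V} {Γ : V → ℝ × ℝ}

/-- Coverage of the whole horizontal line through `Γ v` by the two opposite leaf rays. -/
lemma line_cover {v a b : V}
    (h2a : (Γ a).2 = (Γ v).2) (hsa : (Γ v).1 < (Γ a).1)
    (h2b : (Γ b).2 = (Γ v).2) (hsb : (Γ b).1 < (Γ v).1) (z : ℝ) :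
    (z, (Γ v).2) ∈ ray (Γ v) (Γ a) ∪ ray (Γ v) (Γ b) := by
  rcases le_total (Γ v).1 z with h | h
  · exact Or.inl (mem_ray_horiz h2a (ne_of_gt hsa) (by nlinarith))
  · exact Or.inr (mem_ray_horiz h2b (ne_of_lt hsb) (by nlinarith))

/-- For a horizontal line fork, no other vertex is drawn on the line. -/
lemma line_level (hconv : IsConvexRectDrawing G Γ) (hcon : G.Connected) {v a b : V}
    (hva : G.Adj v a) (hla : deg G a = 1) (h2a : (Γ a).2 = (Γ v).2) (hsa : (Γ v).1 < (Γ a).1)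
    (hvb : G.Adj v b) (hlb : deg G b = 1) (h2b : (Γ b).2 = (Γ v).2) (hsb : (Γ b).1 < (Γ v).1)
    {x : V} (hxv : x ≠ v) (hxa : x ≠ a) (hxb : x ≠ b) : (Γ x).2 ≠ (Γ v).2 := by
  intro hlev
  -- x has a neighbor
  obtain ⟨y, hxy⟩ : ∃ y, G.Adj x y := by
    have hw := (hcon.preconnected x v).some
    cases hw with
    | nil => exact absurd rfl hxv
    | cons h _ => exact ⟨_, h⟩
  have hx : Γ x ∈ ray (Γ v) (Γ a) ∪ ray (Γ v) (Γ b) := by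
    have h := line_cover h2a hsa h2b hsb (Γ x).1
    rw [← hlev] at h
    rwa [Prod.mk.eta] at h
  have hmem : Γ x ∈ edgeDrawn G Γ x y := seg_sub_edgeDrawn x y (left_mem_segment ℝ _ _)
  rcases hx with hx | hx
  · have hs : s(x, y) ≠ s(v, a) := by
      intro hss; rw [Sym2.eq_iff] at hss
      rcases hss with ⟨rfl, rfl⟩ | ⟨rfl, rfl⟩
      · exact hxv rfl
      · exact hxa rfl
    obtain ⟨w, hw1, hw2, hp⟩ := hconv.2 x y v a hxy hva hs _ ⟨hmem, ray_sub_edgeDrawn hla hx⟩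
    rcases hw1 with rfl | rfl
    · rcases hw2 with h | h
      · exact hxv h
      · exact hxa h
    · have : x = w := hconv.1.1 hp
      subst this
      exact hxy.ne rfl
  · have hs : s(x, y) ≠ s(v, b) := by
      intro hss; rw [Sym2.eq_iff] at hss
      rcases hss with ⟨rfl, rfl⟩ | ⟨rfl, rfl⟩
      · exact hxv rfl
      · exact hxb rfl
    obtain ⟨w, hw1, hw2, hp⟩ := hconv.2 x y v b hxy hvb hs _ ⟨hmem, ray_sub_edgeDrawn hlb hx⟩
    rcases hw1 with rfl | rfl
    · rcases hw2 with h | h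
      · exact hxv h
      · exact hxb h
    · have : x = w := hconv.1.1 hp
      subst this
      exact hxy.ne rfl

end Line

section Side

variable {V : Type*} [Finite V] {G : SimpleGraph V} {Γ : V → ℝ × ℝ}

private lemma line_side_key (hconv : IsConvexRectDrawing G Γ) (hcon : G.Connected)
    {a b c : V} {σ : ℝ} (hσ : σ = 1 ∨ σ = -1)
    (hla : deg G a = 1) (hlb : deg G b = 1) {v x : V} (w : G.Walk x v) :
    G.Adj v a → (Γ a).2 = (Γ v).2 → (Γ v).1 < (Γ a).1 →
    G.Adj v b → (Γ b).2 = (Γ v).2 → (Γ b).1 < (Γ v).1 →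
    G.Adj v c → (Γ c).1 = (Γ v).1 → 0 < σ * ((Γ c).2 - (Γ v).2) →
    (∀ y, G.Adj v y → y = a ∨ y = b ∨ y = c) →
    x = v ∨ x = a ∨ x = b ∨ 0 < σ * ((Γ x).2 - (Γ v).2) := by
  have hss := pm_sq hσ
  induction w with
  | nil => intro _ _ _ _ _ _ _ _ _ _; exact Or.inl rfl
  | @cons x' y' v' hadj w' ih =>
    intro hva h2a hsa hvb h2b hsb hvc h1c hsc hnbr
    have HY := ih hva h2a hsa hvb h2b hsb hvc h1c hsc hnbr
    by_cases hxv : x' = v'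
    · exact Or.inl hxv
    by_cases hxa : x' = a
    · exact Or.inr (Or.inl hxa)
    by_cases hxb : x' = b
    · exact Or.inr (Or.inr (Or.inl hxb))
    refine Or.inr (Or.inr (Or.inr ?_))
    have hxlev : (Γ x').2 ≠ (Γ v').2 :=
      line_level hconv hcon hva hla h2a hsa hvb hlb h2b hsb hxv hxa hxb
    rcases HY with rfl | rfl | rfl | hy
    · -- y' = v' : x' is a neighbor of v', hence x' = c
      rcases hnbr x' hadj.symm with rfl | rfl | rfl
      · exact absurd rfl hxa
      · exact absurd rfl hxb
      · exact hsc
    · -- y' = a : then x' = v'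
      exact absurd (leaf_unique_nbr hla hadj.symm hva.symm) hxv
    · exact absurd (leaf_unique_nbr hlb hadj.symm hvb.symm) hxv
    · -- y' is strictly on the σ side
      rcases adj_dir hconv hadj with ⟨he, -⟩ | ⟨he, -⟩
      · -- horizontal edge: same level
        rw [he] at hy; exact hy
      · -- vertical edge
        by_contra hcc
        have hx2 : σ * ((Γ x').2 - (Γ v').2) < 0 := by
          rcases lt_or_eq_of_le (le_of_not_gt hcc) with h | h
          · exact h
          · exfalso
            apply hxlev
            have hs0 : σ ≠ 0 := by rcases hσ with rfl | rfl <;> norm_num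
            have := mul_eq_zero.mp h
            rcases this with h' | h'
            · exact absurd h' hs0
            · exact sub_eq_zero.mp h'
        -- the segment from x' to y' crosses the line
        have hyv : y' ≠ v' := by
          rintro rfl; rw [sub_self, mul_zero] at hy; exact lt_irrefl 0 hy
        have hya : y' ≠ a := by
          rintro rfl; rw [h2a, sub_self, mul_zero] at hy; exact lt_irrefl 0 hy
        have hyb : y' ≠ b := by
          rintro rfl; rw [h2b, sub_self, mul_zero] at hy; exact lt_irrefl 0 hy
        have hmul : ((Γ x').2 - (Γ v').2) * ((Γ y').2 - (Γ v').2) ≤ 0 :=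
          pm_mul_nonpos hσ (le_of_lt (mul_neg_of_neg_of_pos hx2 hy))
        have hseg : ((Γ x').1, (Γ v').2) ∈ segment ℝ (Γ x') (Γ y') :=
          mem_seg_vert he hmul
        have hray := line_cover h2a hsa h2b hsb (Γ x').1
        rcases hray with hr | hr
        · exact no_cross hconv hadj hva hxv hxa hyv hya
            (seg_sub_edgeDrawn x' y' hseg) (ray_sub_edgeDrawn hla hr)
        · exact no_cross hconv hadj hvb hxv hxb hyv hyb
            (seg_sub_edgeDrawn x' y' hseg) (ray_sub_edgeDrawn hlb hr)

/-- Sidedness for a horizontal line fork. -/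
lemma line_side (hconv : IsConvexRectDrawing G Γ) (hcon : G.Connected)
    {v a b c : V} {σ : ℝ} (hσ : σ = 1 ∨ σ = -1)
    (hva : G.Adj v a) (hla : deg G a = 1) (h2a : (Γ a).2 = (Γ v).2) (hsa : (Γ v).1 < (Γ a).1)
    (hvb : G.Adj v b) (hlb : deg G b = 1) (h2b : (Γ b).2 = (Γ v).2) (hsb : (Γ b).1 < (Γ v).1)
    (hvc : G.Adj v c) (h1c : (Γ c).1 = (Γ v).1) (hsc : 0 < σ * ((Γ c).2 - (Γ v).2))
    (hnbr : ∀ y, G.Adj v y → y = a ∨ y = b ∨ y = c)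
    {x : V} (hxv : x ≠ v) (hxa : x ≠ a) (hxb : x ≠ b) :
    0 < σ * ((Γ x).2 - (Γ v).2) := by
  have h := line_side_key hconv hcon hσ hla hlb ((hcon.preconnected x v).some)
    hva h2a hsa hvb h2b hsb hvc h1c hsc hnbr
  rcases h with h | h | h | h
  · exact absurd h hxv
  · exact absurd h hxa
  · exact absurd h hxb
  · exact h

/-- A horizontal line fork forbids vertical leaf rays pointing towards its line. -/
lemma no_opp_vert (hconv : IsConvexRectDrawing G Γ) (hcon : G.Connected)
    {v a b c : V} {σ : ℝ} (hσ : σ = 1 ∨ σ = -1)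
    (hva : G.Adj v a) (hla : deg G a = 1) (h2a : (Γ a).2 = (Γ v).2) (hsa : (Γ v).1 < (Γ a).1)
    (hvb : G.Adj v b) (hlb : deg G b = 1) (h2b : (Γ b).2 = (Γ v).2) (hsb : (Γ b).1 < (Γ v).1)
    (hvc : G.Adj v c) (h1c : (Γ c).1 = (Γ v).1) (hsc : 0 < σ * ((Γ c).2 - (Γ v).2))
    (hnbr : ∀ y, G.Adj v y → y = a ∨ y = b ∨ y = c)
    {u l : V} {τ : ℝ} (hτ : τ = 1 ∨ τ = -1) (huv : u ≠ v) (hdegu : 2 ≤ deg G u)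
    (hul : G.Adj u l) (hll : deg G l = 1) (h1l : (Γ l).1 = (Γ u).1)
    (hsl : 0 < τ * ((Γ l).2 - (Γ u).2)) : τ = σ := by
  have hdegv : 2 ≤ deg G v := two_le_deg hva hvb (by
    rintro rfl; exact absurd rfl (ne_of_gt (lt_trans hsb hsa)))
  by_contra hne
  have hτσ : τ = -σ := by
    rcases hτ with rfl | rfl <;> rcases hσ with rfl | rfl <;> first | rfl | exact absurd rfl hne | norm_num
  subst hτσ
  have hua : u ≠ a := by rintro rfl; rw [hla] at hdegu; omega
  have hub : u ≠ b := by rintro rfl; rw [hlb] at hdegu; omega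
  have hside : 0 < σ * ((Γ u).2 - (Γ v).2) := line_side hconv hcon hσ hva hla h2a hsa
    hvb hlb h2b hsb hvc h1c hsc hnbr huv hua hub
  have hlv : l ≠ v := by rintro rfl; rw [hll] at hdegv; omega
  have hlaa : l ≠ a := by rintro rfl; exact huv (leaf_unique_nbr hla hul.symm hva.symm)
  have hlbb : l ≠ b := by rintro rfl; exact huv (leaf_unique_nbr hlb hul.symm hvb.symm)
  have hlne : (Γ l).2 ≠ (Γ u).2 := by
    intro hc; rw [hc] at hsl; simp at hsl
  have hm : ((Γ u).1, (Γ v).2) ∈ ray (Γ u) (Γ l) := by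
    apply mem_ray_vert h1l hlne
    have h1 : 0 < (-σ) * ((Γ v).2 - (Γ u).2) := by
      have hgoal : (-σ) * ((Γ v).2 - (Γ u).2) = σ * ((Γ u).2 - (Γ v).2) := by ring
      rw [hgoal]; exact hside
    exact le_of_lt (pm_mul_pos (e := -σ)
      (by rcases hσ with rfl | rfl <;> norm_num) (mul_pos hsl h1))
  have hray := line_cover h2a hsa h2b hsb (Γ u).1
  rcases hray with hr | hr
  · exact no_cross hconv hul hva huv hua hlv hlaa
      (ray_sub_edgeDrawn hll hm) (ray_sub_edgeDrawn hla hr)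
  · exact no_cross hconv hul hvb huv hub hlv hlbb
      (ray_sub_edgeDrawn hll hm) (ray_sub_edgeDrawn hlb hr)

end Side

section Swap

variable {V : Type*} {G : SimpleGraph V}

/-- Coordinate swap. -/
def sw (p : ℝ × ℝ) : ℝ × ℝ := (p.2, p.1)

lemma sw_sw (p : ℝ × ℝ) : sw (sw p) = p := rfl

lemma sw_seg {p q x : ℝ × ℝ} (h : x ∈ segment ℝ p q) : sw x ∈ segment ℝ (sw p) (sw q) := by
  obtain ⟨u, v, hu, hv, huv, rfl⟩ := h
  exact ⟨u, v, hu, hv, huv, rfl⟩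

lemma sw_ray {p q x : ℝ × ℝ} (h : x ∈ ray p q) : sw x ∈ ray (sw p) (sw q) := by
  obtain ⟨t, ht, rfl⟩ := h
  exact ⟨t, ht, rfl⟩

lemma sw_edgeDrawn {Γ : V → ℝ × ℝ} {a b : V} {x : ℝ × ℝ} (h : x ∈ edgeDrawn G Γ a b) :
    sw x ∈ edgeDrawn G (fun w => sw (Γ w)) a b := by
  unfold edgeDrawn at h ⊢
  rcases h with h | h
  · left
    split_ifs with hd
    · rw [if_pos hd] at h; exact sw_ray h
    · rw [if_neg hd] at h; exact sw_seg h
  · right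
    split_ifs with hd
    · rw [if_pos hd] at h; exact sw_ray h
    · rw [if_neg hd] at h; exact sw_seg h

lemma sw_conv {Γ : V → ℝ × ℝ} (hconv : IsConvexRectDrawing G Γ) :
    IsConvexRectDrawing G (fun w => sw (Γ w)) := by
  obtain ⟨⟨hinj, haxis, hrect⟩, hconv2⟩ := hconv
  refine ⟨⟨?_, ?_, ?_⟩, ?_⟩
  · intro u v h
    apply hinj
    have : sw (sw (Γ u)) = sw (sw (Γ v)) := by rw [congrArg sw h]
    simpa [sw_sw] using this
  · intro u v h
    rcases haxis u v h with h1 | h2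
    · exact Or.inr h1
    · exact Or.inl h2
  · intro u v x y huv hxy hs p hp
    obtain ⟨hp1, hp2⟩ := hp
    have h1 : sw p ∈ segment ℝ (Γ u) (Γ v) := sw_seg hp1
    have h2 : sw p ∈ segment ℝ (Γ x) (Γ y) := sw_seg hp2
    obtain ⟨w, hw1, hw2, hpw⟩ := hrect u v x y huv hxy hs (sw p) ⟨h1, h2⟩
    exact ⟨w, hw1, hw2, by rw [← sw_sw p, hpw]⟩
  · intro u v x y huv hxy hs p hp
    obtain ⟨hp1, hp2⟩ := hp
    have h1 := sw_edgeDrawn (Γ := fun w => sw (Γ w)) (a := u) (b := v) hp1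
    have h2 := sw_edgeDrawn (Γ := fun w => sw (Γ w)) (a := x) (b := y) hp2
    simp only [sw_sw] at h1 h2
    have h1' : sw p ∈ edgeDrawn G Γ u v := h1
    have h2' : sw p ∈ edgeDrawn G Γ x y := h2
    obtain ⟨w, hw1, hw2, hpw⟩ := hconv2 u v x y huv hxy hs (sw p) ⟨h1', h2'⟩
    exact ⟨w, hw1, hw2, by rw [← sw_sw p, hpw]⟩

end Swap

section Classify

variable {V : Type*} [Finite V] {G : SimpleGraph V}

/-- `v` has a horizontal leaf ray of sign `ε` and a vertical leaf ray of sign `δ`. -/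
def QuadSig (G : SimpleGraph V) (Γ : V → ℝ × ℝ) (v : V) (ε δ : ℝ) : Prop :=
  ∃ a b, G.Adj v a ∧ deg G a = 1 ∧ (Γ a).2 = (Γ v).2 ∧ 0 < ε * ((Γ a).1 - (Γ v).1) ∧
    G.Adj v b ∧ deg G b = 1 ∧ (Γ b).1 = (Γ v).1 ∧ 0 < δ * ((Γ b).2 - (Γ v).2)

def QuadF (G : SimpleGraph V) (Γ : V → ℝ × ℝ) (v : V) : Prop :=
  ∃ ε δ : ℝ, (ε = 1 ∨ ε = -1) ∧ (δ = 1 ∨ δ = -1) ∧ QuadSig G Γ v ε δ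

/-- `v` is a horizontal line fork: two opposite horizontal leaf rays, a vertical
third edge, and exactly three neighbors. -/
def LineHF (G : SimpleGraph V) (Γ : V → ℝ × ℝ) (v : V) : Prop :=
  ∃ a b c, ∃ σ : ℝ, (σ = 1 ∨ σ = -1) ∧
    G.Adj v a ∧ deg G a = 1 ∧ (Γ a).2 = (Γ v).2 ∧ (Γ v).1 < (Γ a).1 ∧
    G.Adj v b ∧ deg G b = 1 ∧ (Γ b).2 = (Γ v).2 ∧ (Γ b).1 < (Γ v).1 ∧
    G.Adj v c ∧ (Γ c).1 = (Γ v).1 ∧ 0 < σ * ((Γ c).2 - (Γ v).2) ∧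
    (∀ y, G.Adj v y → y = a ∨ y = b ∨ y = c)

/-- `v` has two opposite vertical leaf rays (lightweight). -/
def LineVL (G : SimpleGraph V) (Γ : V → ℝ × ℝ) (v : V) : Prop :=
  ∃ b b', G.Adj v b ∧ deg G b = 1 ∧ (Γ b).1 = (Γ v).1 ∧ (Γ v).2 < (Γ b).2 ∧
    G.Adj v b' ∧ deg G b' = 1 ∧ (Γ b').1 = (Γ v).1 ∧ (Γ b').2 < (Γ v).2

lemma lineVL_swap {Γ : V → ℝ × ℝ} {v : V} (h : LineVL G (fun w => sw (Γ w)) v) :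
    ∃ a a', G.Adj v a ∧ deg G a = 1 ∧ (Γ a).2 = (Γ v).2 ∧ (Γ v).1 < (Γ a).1 ∧
      G.Adj v a' ∧ deg G a' = 1 ∧ (Γ a').2 = (Γ v).2 ∧ (Γ a').1 < (Γ v).1 := by
  obtain ⟨b, b', h1, h2, h3, h4, h5, h6, h7, h8⟩ := h
  exact ⟨b, b', h1, h2, h3, h4, h5, h6, h7, h8⟩

lemma quadF_swap {Γ : V → ℝ × ℝ} {v : V} (h : QuadF G (fun w => sw (Γ w)) v) :
    QuadF G Γ v := by
  obtain ⟨ε, δ, hε, hδ, a, b, h1, h2, h3, h4, h5, h6, h7, h8⟩ := h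
  exact ⟨δ, ε, hδ, hε, b, a, h5, h6, h7, h8, h1, h2, h3, h4⟩

/-- Three distinct horizontal leaf rays at one vertex are impossible. -/
lemma three_horiz {Γ : V → ℝ × ℝ} (hconv : IsConvexRectDrawing G Γ) {v l1 l2 l3 : V}
    {s1 s2 s3 : ℝ} (hs1 : s1 = 1 ∨ s1 = -1) (hs2 : s2 = 1 ∨ s2 = -1) (hs3 : s3 = 1 ∨ s3 = -1)
    (h12 : l1 ≠ l2) (h13 : l1 ≠ l3) (h23 : l2 ≠ l3)
    (ha1 : G.Adj v l1) (he1 : (Γ l1).2 = (Γ v).2) (hp1 : 0 < s1 * ((Γ l1).1 - (Γ v).1))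
    (ha2 : G.Adj v l2) (he2 : (Γ l2).2 = (Γ v).2) (hp2 : 0 < s2 * ((Γ l2).1 - (Γ v).1))
    (ha3 : G.Adj v l3) (he3 : (Γ l3).2 = (Γ v).2) (hp3 : 0 < s3 * ((Γ l3).1 - (Γ v).1)) :
    False := by
  rcases hs1 with rfl | rfl <;> rcases hs2 with rfl | rfl <;> rcases hs3 with rfl | rfl
  · exact not_same_dir_h hconv ha1 ha2 h12 (Or.inl rfl) he1 hp1 he2 hp2
  · exact not_same_dir_h hconv ha1 ha2 h12 (Or.inl rfl) he1 hp1 he2 hp2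
  · exact not_same_dir_h hconv ha1 ha3 h13 (Or.inl rfl) he1 hp1 he3 hp3
  · exact not_same_dir_h hconv ha2 ha3 h23 (Or.inr rfl) he2 hp2 he3 hp3
  · exact not_same_dir_h hconv ha2 ha3 h23 (Or.inl rfl) he2 hp2 he3 hp3
  · exact not_same_dir_h hconv ha1 ha3 h13 (Or.inr rfl) he1 hp1 he3 hp3
  · exact not_same_dir_h hconv ha1 ha2 h12 (Or.inr rfl) he1 hp1 he2 hp2
  · exact not_same_dir_h hconv ha1 ha2 h12 (Or.inr rfl) he1 hp1 he2 hp2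

/-- Classification of forks. -/
lemma classify {Γ : V → ℝ × ℝ} (hconv : IsConvexRectDrawing G Γ) {v : V}
    (hv : IsKFork 2 G v ∨ IsKFork 3 G v) :
    QuadF G Γ v ∨ LineHF G Γ v ∨ LineVL G Γ v := by
  have h2le : 2 ≤ {u | G.Adj v u ∧ deg G u = 1}.ncard := by
    rcases hv with ⟨-, h⟩ | ⟨-, h⟩
    · exact h
    · omega
  have h1lt : 1 < {u | G.Adj v u ∧ deg G u = 1}.ncard := by omega
  obtain ⟨a, ha, b, hb, hab⟩ := (Set.one_lt_ncard (Set.toFinite _)).mp h1lt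
  obtain ⟨hva, hla⟩ := ha
  obtain ⟨hvb, hlb⟩ := hb
  rcases adj_dir' hconv hva with ⟨ea, hea, hha, hpa⟩ | ⟨da, hda, hva1, hpa⟩ <;>
    rcases adj_dir' hconv hvb with ⟨eb, heb, hhb, hpb⟩ | ⟨db, hdb, hvb1, hpb⟩
  · -- both horizontal
    by_cases hvert : ∃ c δ, (δ = 1 ∨ δ = -1) ∧ G.Adj v c ∧ deg G c = 1 ∧
        (Γ c).1 = (Γ v).1 ∧ 0 < δ * ((Γ c).2 - (Γ v).2)
    · obtain ⟨c, δ, hδ, hvc, hlc, hc1, hcp⟩ := hvert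
      exact Or.inl ⟨ea, δ, hea, hδ, a, c, hva, hla, hha, hpa, hvc, hlc, hc1, hcp⟩
    right; left
    -- signs must differ
    have hsne : ea ≠ eb := by
      rintro rfl
      exact not_same_dir_h hconv hva hvb hab hea hha hpa hhb hpb
    -- v is a 2-fork
    have hdeg3 : deg G v = 3 := by
      rcases hv with ⟨h3, -⟩ | ⟨-, h3⟩
      · exact h3
      · exfalso
        have h2lt : 2 < {u | G.Adj v u ∧ deg G u = 1}.ncard := by omega
        obtain ⟨l1, h1, l2, h2, l3, h3', h12, h13, h23⟩ :=
          (Set.two_lt_ncard (Set.toFinite _)).mp h2lt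
        have hdir : ∀ l : V, G.Adj v l → deg G l = 1 →
            ∃ s : ℝ, (s = 1 ∨ s = -1) ∧ (Γ l).2 = (Γ v).2 ∧ 0 < s * ((Γ l).1 - (Γ v).1) := by
          intro l hvl hll
          rcases adj_dir' hconv hvl with ⟨s, hs, h'1, h'2⟩ | ⟨s, hs, h'1, h'2⟩
          · exact ⟨s, hs, h'1, h'2⟩
          · exact absurd ⟨l, s, hs, hvl, hll, h'1, h'2⟩ hvert
        obtain ⟨s1, hs1, hl1e, hl1p⟩ := hdir l1 h1.1 h1.2
        obtain ⟨s2, hs2, hl2e, hl2p⟩ := hdir l2 h2.1 h2.2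
        obtain ⟨s3, hs3, hl3e, hl3p⟩ := hdir l3 h3'.1 h3'.2
        exact three_horiz hconv hs1 hs2 hs3 h12 h13 h23
          h1.1 hl1e hl1p h2.1 hl2e hl2p h3'.1 hl3e hl3p
    -- third neighbor
    obtain ⟨c, hcmem, hcab⟩ : ∃ c ∈ G.neighborSet v, c ∉ ({a, b} : Set V) := by
      by_contra hcc
      push_neg at hcc
      have hsub : G.neighborSet v ⊆ {a, b} := hcc
      have := Set.ncard_le_ncard hsub (Set.toFinite _)
      rw [Set.ncard_pair hab] at this
      have : deg G v ≤ 2 := this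
      omega
    simp only [Set.mem_insert_iff, Set.mem_singleton_iff, not_or] at hcab
    obtain ⟨hca, hcb⟩ := hcab
    have hvc : G.Adj v c := hcmem
    -- c's edge is vertical
    obtain ⟨σ, hσ, hc1, hcp⟩ : ∃ σ : ℝ, (σ = 1 ∨ σ = -1) ∧ (Γ c).1 = (Γ v).1 ∧
        0 < σ * ((Γ c).2 - (Γ v).2) := by
      rcases adj_dir' hconv hvc with ⟨s, hs, h'1, h'2⟩ | ⟨s, hs, h'1, h'2⟩
      · exfalso
        rcases hs with rfl | rfl <;> rcases hea with rfl | rfl <;> rcases heb with rfl | rfl <;>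
          first
            | exact absurd rfl hsne
            | exact not_same_dir_h hconv hva hvc (Ne.symm hca) (Or.inl rfl) hha hpa h'1 h'2
            | exact not_same_dir_h hconv hvb hvc (Ne.symm hcb) (Or.inl rfl) hhb hpb h'1 h'2
            | exact not_same_dir_h hconv hva hvc (Ne.symm hca) (Or.inr rfl) hha hpa h'1 h'2
            | exact not_same_dir_h hconv hvb hvc (Ne.symm hcb) (Or.inr rfl) hhb hpb h'1 h'2
      · exact ⟨s, hs, h'1, h'2⟩
    have hnbr : ∀ y, G.Adj v y → y = a ∨ y = b ∨ y = c := by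
      have habc : ({a, b, c} : Set V).ncard = 3 := by
        have hanotin : a ∉ ({b, c} : Set V) := by
          simp only [Set.mem_insert_iff, Set.mem_singleton_iff]
          push_neg
          exact ⟨hab, fun h => hca (Eq.symm h)⟩
        rw [Set.ncard_insert_of_notMem hanotin (Set.toFinite _),
          Set.ncard_pair (fun h => hcb (Eq.symm h))]
      have hsub : ({a, b, c} : Set V) ⊆ G.neighborSet v := by
        intro y hy
        rcases hy with rfl | rfl | rfl
        · exact hva
        · exact hvb
        · exact hvc
      have heq := Set.eq_of_subset_of_ncard_le hsub (by
        show deg G v ≤ _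
        rw [habc, hdeg3]) (Set.toFinite _)
      intro y hy
      have : y ∈ ({a, b, c} : Set V) := by rw [heq]; exact hy
      simpa using this
    -- orient a and b
    rcases hea with rfl | rfl
    · rcases heb with rfl | rfl
      · exact absurd rfl hsne
      · exact ⟨a, b, c, σ, hσ, hva, hla, hha, by linarith, hvb, hlb, hhb, by linarith,
          hvc, hc1, hcp, hnbr⟩
    · rcases heb with rfl | rfl
      · refine ⟨b, a, c, σ, hσ, hvb, hlb, hhb, by linarith, hva, hla, hha, by linarith,
          hvc, hc1, hcp, fun y hy => ?_⟩
        rcases hnbr y hy with h | h | h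
        · exact Or.inr (Or.inl h)
        · exact Or.inl h
        · exact Or.inr (Or.inr h)
      · exact absurd rfl hsne
  · exact Or.inl ⟨ea, db, hea, hdb, a, b, hva, hla, hha, hpa, hvb, hlb, hvb1, hpb⟩
  · exact Or.inl ⟨eb, da, heb, hda, b, a, hvb, hlb, hhb, hpb, hva, hla, hva1, hpa⟩
  · -- both vertical
    have hsne : da ≠ db := by
      rintro rfl
      exact not_same_dir_v hconv hva hvb hab hda hva1 hpa hvb1 hpb
    by_cases hhor : ∃ c ε, (ε = 1 ∨ ε = -1) ∧ G.Adj v c ∧ deg G c = 1 ∧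
        (Γ c).2 = (Γ v).2 ∧ 0 < ε * ((Γ c).1 - (Γ v).1)
    · obtain ⟨c, ε, hε, hvc, hlc, hc2, hcp⟩ := hhor
      exact Or.inl ⟨ε, da, hε, hda, c, a, hvc, hlc, hc2, hcp, hva, hla, hva1, hpa⟩
    · right; right
      rcases hda with rfl | rfl
      · rcases hdb with rfl | rfl
        · exact absurd rfl hsne
        · exact ⟨a, b, hva, hla, hva1, by linarith, hvb, hlb, hvb1, by linarith⟩
      · rcases hdb with rfl | rfl
        · exact ⟨b, a, hvb, hlb, hvb1, by linarith, hva, hla, hva1, by linarith⟩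
        · exact absurd rfl hsne

end Classify

section Bounds

variable {V : Type*} [Fintype V] {G : SimpleGraph V}

/-- Abbreviation: `v` is a 2-fork or a 3-fork. -/
def Fk (G : SimpleGraph V) (v : V) : Prop := IsKFork 2 G v ∨ IsKFork 3 G v

lemma fk_deg {v : V} (h : Fk G v) : 3 ≤ deg G v := by
  rcases h with ⟨h, -⟩ | ⟨h, -⟩ <;> omega

lemma quad_clash {Γ : V → ℝ × ℝ} (hconv : IsConvexRectDrawing G Γ) (hcon : G.Connected)
    {v u : V} {ε δ : ℝ} (hε : ε = 1 ∨ ε = -1) (hδ : δ = 1 ∨ δ = -1) (hvu : v ≠ u)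
    (h1 : QuadSig G Γ v ε δ) (h2 : QuadSig G Γ u ε δ) : False := by
  obtain ⟨a, b, hva, hla, h2a, hsa, hvb, hlb, h1b, hsb⟩ := h1
  obtain ⟨a', b', hua, hla', h2a', hsa', hub, hlb', h1b', hsb'⟩ := h2
  exact quad_unique hconv hcon hε hδ hvu hva hla h2a hsa hvb hlb h1b hsb
    hua hla' h2a' hsa' hub hlb' h1b' hsb'

/-- If some fork is a horizontal line fork, there are at most 4 forks. -/
lemma boundA {Γ : V → ℝ × ℝ} (hconv : IsConvexRectDrawing G Γ) (hcon : G.Connected)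
    (hclass : ∀ w, Fk G w → QuadF G Γ w ∨ LineHF G Γ w ∨ LineVL G Γ w)
    {v0 : V} (hv0 : Fk G v0) (hL : LineHF G Γ v0) : {v | Fk G v}.ncard ≤ 4 := by
  obtain ⟨a, b, c, σ, hσ, hva, hla, h2a, hsa, hvb, hlb, h2b, hsb, hvc, h1c, hsc, hnbr⟩ := hL
  -- vertical leaf rays of other forks must have sign σ
  have hforce : ∀ u l : V, ∀ τ : ℝ, (τ = 1 ∨ τ = -1) → u ≠ v0 → 2 ≤ deg G u →
      G.Adj u l → deg G l = 1 → (Γ l).1 = (Γ u).1 → 0 < τ * ((Γ l).2 - (Γ u).2) → τ = σ :=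
    fun u l τ hτ huv hdegu hul hll h1l hsl =>
      no_opp_vert hconv hcon hσ hva hla h2a hsa hvb hlb h2b hsb hvc h1c hsc hnbr
        hτ huv hdegu hul hll h1l hsl
  have hNoVL : ∀ u, Fk G u → u ≠ v0 → ¬ LineVL G Γ u := by
    rintro u hu huv ⟨b1, b1', h1, h2, h3, h4, h5, h6, h7, h8⟩
    have hdegu : 2 ≤ deg G u := le_trans (by norm_num) (fk_deg hu)
    have e1 : (1 : ℝ) = σ := hforce u b1 1 (Or.inl rfl) huv hdegu h1 h2 h3 (by linarith)
    have e2 : (-1 : ℝ) = σ := hforce u b1' (-1) (Or.inr rfl) huv hdegu h5 h6 h7 (by linarith)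
    linarith [e1, e2]
  have hsidev0 : ∀ x, x ≠ v0 → x ≠ a → x ≠ b → 0 < σ * ((Γ x).2 - (Γ v0).2) :=
    fun x hx1 hx2 hx3 =>
      line_side hconv hcon hσ hva hla h2a hsa hvb hlb h2b hsb hvc h1c hsc hnbr hx1 hx2 hx3
  by_cases hu2 : ∃ u, Fk G u ∧ u ≠ v0 ∧ LineHF G Γ u
  · obtain ⟨u0, hu0, hu0v, hL'⟩ := hu2
    obtain ⟨a', b', c', σ', hσ', hva', hla', h2a', hsa', hvb', hlb', h2b', hsb',
      hvc', h1c', hsc', hnbr'⟩ := hL'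
    have hside1 : ∀ x, x ≠ u0 → x ≠ a' → x ≠ b' → 0 < σ' * ((Γ x).2 - (Γ u0).2) :=
      fun x hx1 hx2 hx3 =>
        line_side hconv hcon hσ' hva' hla' h2a' hsa' hvb' hlb' h2b' hsb'
          hvc' h1c' hsc' hnbr' hx1 hx2 hx3
    have hdegv0 : 3 ≤ deg G v0 := fk_deg hv0
    have hdegu0 : 3 ≤ deg G u0 := fk_deg hu0
    have hv0a' : v0 ≠ a' := by rintro rfl; rw [hla'] at hdegv0; omega
    have hv0b' : v0 ≠ b' := by rintro rfl; rw [hlb'] at hdegv0; omega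
    have hu0a : u0 ≠ a := by rintro rfl; rw [hla] at hdegu0; omega
    have hu0b : u0 ≠ b := by rintro rfl; rw [hlb] at hdegu0; omega
    have hs1 : 0 < σ * ((Γ u0).2 - (Γ v0).2) := hsidev0 u0 hu0v hu0a hu0b
    have hs2 : 0 < σ' * ((Γ v0).2 - (Γ u0).2) := hside1 v0 (Ne.symm hu0v) hv0a' hv0b'
    have hsub : {v | Fk G v} ⊆ {v0, u0} := by
      intro w hw
      by_contra hwmem
      simp only [Set.mem_insert_iff, Set.mem_singleton_iff, not_or] at hwmem
      obtain ⟨hwv0, hwu0⟩ := hwmem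
      have hdegw : 3 ≤ deg G w := fk_deg hw
      rcases hclass w hw with hq | hl | hvl
      · -- quad fork: its vertical ray sign must equal both σ and σ'
        obtain ⟨ε, δ, hε, hδ, aw, bw, hw1, hw2, hw3, hw4, hw5, hw6, hw7, hw8⟩ := hq
        have e1 : δ = σ := hforce w bw δ hδ hwv0 (by omega) hw5 hw6 hw7 hw8
        have e2 : δ = σ' := no_opp_vert hconv hcon hσ' hva' hla' h2a' hsa' hvb' hlb'
          h2b' hsb' hvc' h1c' hsc' hnbr' hδ hwu0 (by omega) hw5 hw6 hw7 hw8
        rcases hδ with rfl | rfl <;> rcases hσ with rfl | rfl <;>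
          rcases hσ' with rfl | rfl <;> first | linarith | simp at e1 | simp at e2
      · -- third line fork
        obtain ⟨aw, bw, cw, σw, hσw, hwa, hwla, hw2a, hwsa, hwb, hwlb, hw2b, hwsb,
          hwc, hw1c, hwsc, hwnbr⟩ := hl
        have hsidew : ∀ x, x ≠ w → x ≠ aw → x ≠ bw → 0 < σw * ((Γ x).2 - (Γ w).2) :=
          fun x hx1 hx2 hx3 =>
            line_side hconv hcon hσw hwa hwla hw2a hwsa hwb hwlb hw2b hwsb
              hwc hw1c hwsc hwnbr hx1 hx2 hx3
        have hwav0 : v0 ≠ aw := by rintro rfl; rw [hwla] at hdegv0; omega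
        have hwbv0 : v0 ≠ bw := by rintro rfl; rw [hwlb] at hdegv0; omega
        have hwau0 : u0 ≠ aw := by rintro rfl; rw [hwla] at hdegu0; omega
        have hwbu0 : u0 ≠ bw := by rintro rfl; rw [hwlb] at hdegu0; omega
        have haw : w ≠ a := by rintro rfl; rw [hla] at hdegw; omega
        have hbw : w ≠ b := by rintro rfl; rw [hlb] at hdegw; omega
        have haw' : w ≠ a' := by rintro rfl; rw [hla'] at hdegw; omega
        have hbw' : w ≠ b' := by rintro rfl; rw [hlb'] at hdegw; omega
        have t1 : 0 < σ * ((Γ w).2 - (Γ v0).2) := hsidev0 w hwv0 haw hbw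
        have t2 : 0 < σ' * ((Γ w).2 - (Γ u0).2) := hside1 w hwu0 haw' hbw'
        have t3 : 0 < σw * ((Γ v0).2 - (Γ w).2) := hsidew v0 (Ne.symm hwv0) hwav0 hwbv0
        have t4 : 0 < σw * ((Γ u0).2 - (Γ w).2) := hsidew u0 (Ne.symm hwu0) hwau0 hwbu0
        rcases hσ with rfl | rfl <;> rcases hσ' with rfl | rfl <;>
          rcases hσw with rfl | rfl <;> linarith
      · exact hNoVL w hw hwv0 hvl
    calc {v | Fk G v}.ncard ≤ ({v0, u0} : Set V).ncard :=
          Set.ncard_le_ncard hsub (Set.toFinite _)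
      _ ≤ 2 := by
          apply le_trans (Set.ncard_insert_le _ _)
          simp
      _ ≤ 4 := by norm_num
  · -- v0 is the only line fork; all other forks are quads with vertical sign σ
    push_neg at hu2
    have hquad : ∀ w, Fk G w → w ≠ v0 → ∃ ε, (ε = 1 ∨ ε = -1) ∧ QuadSig G Γ w ε σ := by
      intro w hw hwv0
      rcases hclass w hw with hq | hl | hvl
      · obtain ⟨ε, δ, hε, hδ, aw, bw, hw1, hw2, hw3, hw4, hw5, hw6, hw7, hw8⟩ := hq
        have e1 : δ = σ := hforce w bw δ hδ hwv0 (le_trans (by norm_num) (fk_deg hw))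
          hw5 hw6 hw7 hw8
        subst e1
        exact ⟨ε, hε, aw, bw, hw1, hw2, hw3, hw4, hw5, hw6, hw7, hw8⟩
      · exact absurd hl (hu2 w hw hwv0)
      · exact absurd hvl (hNoVL w hw hwv0)
    have hsmall : ({v | Fk G v} \ {v0}).ncard ≤ 2 := by
      by_contra hbig
      push_neg at hbig
      obtain ⟨w1, hw1, w2, hw2, w3, hw3, h12, h13, h23⟩ :=
        (Set.two_lt_ncard (Set.toFinite _)).mp hbig
      simp only [Set.mem_diff, Set.mem_setOf_eq, Set.mem_singleton_iff] at hw1 hw2 hw3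
      obtain ⟨ε1, hε1, hq1⟩ := hquad w1 hw1.1 hw1.2
      obtain ⟨ε2, hε2, hq2⟩ := hquad w2 hw2.1 hw2.2
      obtain ⟨ε3, hε3, hq3⟩ := hquad w3 hw3.1 hw3.2
      rcases hε1 with rfl | rfl <;> rcases hε2 with rfl | rfl <;> rcases hε3 with rfl | rfl <;>
        first
          | exact quad_clash hconv hcon (Or.inl rfl) hσ h12 hq1 hq2
          | exact quad_clash hconv hcon (Or.inl rfl) hσ h13 hq1 hq3
          | exact quad_clash hconv hcon (Or.inl rfl) hσ h23 hq2 hq3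
          | exact quad_clash hconv hcon (Or.inr rfl) hσ h12 hq1 hq2
          | exact quad_clash hconv hcon (Or.inr rfl) hσ h13 hq1 hq3
          | exact quad_clash hconv hcon (Or.inr rfl) hσ h23 hq2 hq3
    have hv0mem : v0 ∈ {v | Fk G v} := hv0
    have := Set.ncard_diff_singleton_add_one hv0mem (Set.toFinite _)
    omega

/-- If all forks are quad forks, there are at most 4 forks. -/
lemma boundQ {Γ : V → ℝ × ℝ} (hconv : IsConvexRectDrawing G Γ) (hcon : G.Connected)
    (hclass : ∀ w, Fk G w → QuadF G Γ w) : {v | Fk G v}.ncard ≤ 4 := by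
  by_contra hbig
  push_neg at hbig
  classical
  set S := {v | Fk G v} with hS
  have hfin : Fintype ↥S := Fintype.ofFinite _
  have hcard : Fintype.card (Bool × Bool) < Fintype.card ↥S := by
    have h1 : Fintype.card ↥S = S.ncard := (Set.ncard_eq_toFinset_card' S ▸ by
      simp [Set.toFinset_card])
    rw [h1]
    simp only [Fintype.card_prod, Fintype.card_bool]
    omega
  have hchoice : ∀ w : ↥S, ∃ ε δ : ℝ, (ε = 1 ∨ ε = -1) ∧ (δ = 1 ∨ δ = -1) ∧
      QuadSig G Γ (w : V) ε δ := fun w => hclass w w.2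
  choose ε δ hε hδ hsig using hchoice
  let f : ↥S → Bool × Bool := fun w => (decide (ε w = 1), decide (δ w = 1))
  obtain ⟨w1, w2, hne, hfeq⟩ := Fintype.exists_ne_map_eq_of_card_lt f hcard
  have hvne : (w1 : V) ≠ (w2 : V) := fun h => hne (Subtype.ext h)
  rw [Prod.ext_iff] at hfeq
  have hεiff : ε w1 = 1 ↔ ε w2 = 1 := by
    have := hfeq.1
    simpa [f, decide_eq_decide] using this
  have hδiff : δ w1 = 1 ↔ δ w2 = 1 := by
    have := hfeq.2
    simpa [f, decide_eq_decide] using this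
  have hεeq : ε w1 = ε w2 := by
    rcases hε w1 with h1 | h1 <;> rcases hε w2 with h2 | h2
    · rw [h1, h2]
    · exact absurd (hεiff.mp h1) (by rw [h2]; norm_num)
    · exact absurd (hεiff.mpr h2) (by rw [h1]; norm_num)
    · rw [h1, h2]
  have hδeq : δ w1 = δ w2 := by
    rcases hδ w1 with h1 | h1 <;> rcases hδ w2 with h2 | h2
    · rw [h1, h2]
    · exact absurd (hδiff.mp h1) (by rw [h2]; norm_num)
    · exact absurd (hδiff.mpr h2) (by rw [h1]; norm_num)
    · rw [h1, h2]
  exact quad_clash hconv hcon (hε w1) (hδ w1) hvne (hsig w1)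
    (hεeq ▸ hδeq ▸ hsig w2)

/-- Main bound: a tree with a convex drawing has at most 4 forks. -/
lemma fork_bound {Γ : V → ℝ × ℝ} (hconv : IsConvexRectDrawing G Γ) (hcon : G.Connected) :
    {v | Fk G v}.ncard ≤ 4 := by
  have hconv' : IsConvexRectDrawing G (fun w => sw (Γ w)) := sw_conv hconv
  by_cases hH : ∃ v, Fk G v ∧ LineHF G Γ v
  · obtain ⟨v, hv, hL⟩ := hH
    exact boundA hconv hcon (fun w hw => classify hconv hw) hv hL
  by_cases hH' : ∃ v, Fk G v ∧ LineHF G (fun w => sw (Γ w)) v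
  · obtain ⟨v, hv, hL⟩ := hH'
    exact boundA hconv' hcon (fun w hw => classify hconv' hw) hv hL
  push_neg at hH hH'
  apply boundQ hconv hcon
  intro w hw
  rcases classify hconv hw with hq | hl | hvl
  · exact hq
  · exact absurd hl (hH w hw)
  rcases classify hconv' hw with hq | hl | hvl'
  · exact quadF_swap hq
  · exact absurd hl (hH' w hw)
  · -- w has both horizontal and vertical opposite leaf-ray pairs
    obtain ⟨a, a', h1, h2, h3, h4, h5, h6, h7, h8⟩ := lineVL_swap hvl'
    obtain ⟨b, b', g1, g2, g3, g4, g5, g6, g7, g8⟩ := hvl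
    exact ⟨1, 1, Or.inl rfl, Or.inl rfl, a, b, h1, h2, h3, by linarith, g1, g2, g3, by linarith⟩

end Bounds

/-- Let `T` be a tree with maximum degree at most 4 and no vertex of degree 2
that admits a convex rectilinear planar drawing. Then `T` has at most four
vertices that are 2-forks or 3-forks; in particular, `T` does not contain five
pairwise vertex-disjoint subtrees each containing a 2-fork or a 3-fork of `T`. -/
theorem stmt6 {V : Type*} [Fintype V] (G : SimpleGraph V)
    (htree : G.IsTree) (hdeg : ∀ v, deg G v ≤ 4) (hno2 : ∀ v, deg G v ≠ 2)
    (hdraw : HasConvexDrawing G) :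
    {v | IsKFork 2 G v ∨ IsKFork 3 G v}.ncard ≤ 4 ∧
    ¬ ∃ (S : Fin 5 → Set V) (f : Fin 5 → V),
        (∀ i j, i ≠ j → Disjoint (S i) (S j)) ∧
        (∀ i, (G.induce (S i)).Connected) ∧
        (∀ i, f i ∈ S i) ∧
        (∀ i, IsKFork 2 G (f i) ∨ IsKFork 3 G (f i)) := by
  obtain ⟨Γ, hconv⟩ := hdraw
  have hcon : G.Connected := htree.isConnected
  have hbound : {v | Fk G v}.ncard ≤ 4 := fork_bound hconv hcon
  have h1 : {v | IsKFork 2 G v ∨ IsKFork 3 G v}.ncard ≤ 4 := hbound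
  refine ⟨h1, ?_⟩
  rintro ⟨Ss, f, hdisj, -, hmem, hforks⟩
  have hinj : Function.Injective f := by
    intro i j hij
    by_contra hne
    have := Set.disjoint_left.mp (hdisj i j hne) (hmem i)
    rw [hij] at this
    exact this (hmem j)
  have hsub : Set.range f ⊆ {v | IsKFork 2 G v ∨ IsKFork 3 G v} := by
    rintro _ ⟨i, rfl⟩; exact hforks i
  have h5 : (Set.range f).ncard = 5 := by
    rw [← Set.image_univ, Set.ncard_image_of_injective _ hinj, Set.ncard_univ]
    simp
  have := Set.ncard_le_ncard hsub (Set.toFinite _)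
  omega

end TurnRegular
end

section
/- Every tree with at least three vertices, maximum degree at most 4, and no vertex of degree 2 contains a 2-fork or a 3-fork, i.e., a vertex of degree 3 adjacent to at least two leaves or a vertex of degree 4 adjacent to at least three leaves. -/
open SimpleGraph

namespace TurnRegular

section Aux

variable {V : Type*} [Fintype V] {G : SimpleGraph V}

lemma deg_eq_degree [DecidableRel G.Adj] (v : V) : deg G v = G.degree v := by
  rw [deg, degree, neighborFinset_def, Set.ncard_eq_toFinset_card']

omit [Fintype V] in
/-- any path in a tree has length equal to the distance between its ends -/
lemma path_length_eq_dist (htree : G.IsTree) {a b : V} (p : G.Walk a b)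
    (hp : p.IsPath) : p.length = G.dist a b := by
  obtain ⟨q, hq, hqlen⟩ := htree.isConnected.exists_path_of_dist a b
  have := (htree.existsUnique_path a b).unique hp hq
  rw [this, hqlen]

lemma one_le_deg_of_adj {u v : V} (h : G.Adj v u) : 1 ≤ deg G u := by
  have : (G.neighborSet u).Nonempty := ⟨v, h.symm⟩
  have hfin : (G.neighborSet u).Finite := Set.toFinite _
  exact (Set.ncard_pos hfin).2 this

end Aux

/-- Every tree with at least three vertices, maximum degree at most 4, and no
vertex of degree 2 contains a 2-fork or a 3-fork, i.e., a vertex of degree 3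
adjacent to at least two leaves or a vertex of degree 4 adjacent to at least
three leaves. -/
theorem stmt8 {V : Type*} [Fintype V] (G : SimpleGraph V)
    (htree : G.IsTree) (hcard : 3 ≤ Nat.card V)
    (hdeg : ∀ v, deg G v ≤ 4) (hno2 : ∀ v, deg G v ≠ 2) :
    ∃ v, IsKFork 2 G v ∨ IsKFork 3 G v := by
  classical
  have hconn : G.Connected := htree.isConnected
  have hne : Nonempty V := hconn.nonempty
  obtain ⟨r⟩ := hne
  -- there is a vertex of degree ≥ 2
  have hex : ∃ w, 2 ≤ deg G w := by
    by_contra hcon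
    push_neg at hcon
    have hsum : ∑ w, G.degree w = 2 * G.edgeFinset.card :=
      G.sum_degrees_eq_twice_card_edges
    have hcardE : G.edgeFinset.card + 1 = Fintype.card V := htree.card_edgeFinset
    have hle : ∑ w, G.degree w ≤ Fintype.card V := by
      calc ∑ w, G.degree w ≤ ∑ _w : V, 1 := by
            refine Finset.sum_le_sum fun w _ => ?_
            have := hcon w
            rw [deg_eq_degree] at this
            omega
        _ = Fintype.card V := by simp
    rw [Nat.card_eq_fintype_card] at hcard
    omega
  -- pick a vertex of degree ≥ 2 maximizing distance from r
  set s : Finset V := Finset.univ.filter (fun w => 2 ≤ deg G w) with hs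
  have hsne : s.Nonempty := by
    obtain ⟨w, hw⟩ := hex
    exact ⟨w, by simp [hs, hw]⟩
  obtain ⟨v, hvs, hvmax⟩ := s.exists_max_image (fun w => G.dist r w) hsne
  have hv2 : 2 ≤ deg G v := by simpa [hs] using hvs
  have hmax : ∀ w, 2 ≤ deg G w → G.dist r w ≤ G.dist r v := by
    intro w hw
    exact hvmax w (by simp [hs, hw])
  -- the unique path from r to any non-leaf neighbor avoids v
  have key : ∀ u1 u2 : V, G.Adj v u1 → G.Adj v u2 → 2 ≤ deg G u1 → 2 ≤ deg G u2 →
      u1 = u2 := by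
    have build : ∀ u : V, G.Adj v u → 2 ≤ deg G u →
        ∃ q : G.Walk r v, q.IsPath ∧ q.reverse.getVert 1 = u := by
      intro u hadj hu
      obtain ⟨p, hp, hplen⟩ := hconn.exists_path_of_dist r u
      have hvp : v ∉ p.support := by
        intro hmem
        have hsplit := p.take_spec hmem
        have hlen : (p.takeUntil v hmem).length + (p.dropUntil v hmem).length
            = p.length := by
          rw [← Walk.length_append, hsplit]
        have h1 : (p.takeUntil v hmem).length = G.dist r v :=
          path_length_eq_dist htree _ (hp.takeUntil hmem)
        have h2 : (p.dropUntil v hmem).length = G.dist v u :=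
          path_length_eq_dist htree _ (hp.dropUntil hmem)
        have h3 : G.dist v u = 1 := dist_eq_one_iff_adj.mpr hadj
        have h4 : G.dist r u ≤ G.dist r v := hmax u hu
        omega
      refine ⟨p.concat hadj.symm, ?_, ?_⟩
      · rw [← Walk.isPath_reverse_iff, Walk.reverse_concat]
        refine hp.reverse.cons ?_
        simpa using hvp
      · rw [Walk.reverse_concat]
        exact (Walk.getVert_cons_succ (n := 0) _ _).trans (Walk.getVert_zero _)
    intro u1 u2 h1 h2 hd1 hd2
    obtain ⟨q1, hq1, hg1⟩ := build u1 h1 hd1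
    obtain ⟨q2, hq2, hg2⟩ := build u2 h2 hd2
    have : q1 = q2 := (htree.existsUnique_path r v).unique hq1 hq2
    rw [← hg1, ← hg2, this]
  -- counting
  have hnl : {u | G.Adj v u ∧ 2 ≤ deg G u}.ncard ≤ 1 := by
    refine Set.ncard_le_one_iff (Set.toFinite _) |>.2 ?_
    rintro a b ⟨ha1, ha2⟩ ⟨hb1, hb2⟩
    exact key a b ha1 hb1 ha2 hb2
  have hunion : G.neighborSet v ⊆
      {u | G.Adj v u ∧ deg G u = 1} ∪ {u | G.Adj v u ∧ 2 ≤ deg G u} := by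
    intro u hu
    have hadj : G.Adj v u := hu
    have h1 : 1 ≤ deg G u := one_le_deg_of_adj hadj
    by_cases hcase : deg G u = 1
    · exact Or.inl ⟨hadj, hcase⟩
    · exact Or.inr ⟨hadj, by omega⟩
  have hcount : deg G v ≤
      {u | G.Adj v u ∧ deg G u = 1}.ncard + {u | G.Adj v u ∧ 2 ≤ deg G u}.ncard := by
    calc deg G v = (G.neighborSet v).ncard := rfl
      _ ≤ ({u | G.Adj v u ∧ deg G u = 1} ∪ {u | G.Adj v u ∧ 2 ≤ deg G u}).ncard :=
          Set.ncard_le_ncard hunion (Set.toFinite _)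
      _ ≤ _ := Set.ncard_union_le _ _
  have hleaf : deg G v - 1 ≤ {u | G.Adj v u ∧ deg G u = 1}.ncard := by omega
  have hd : deg G v = 3 ∨ deg G v = 4 := by
    have := hdeg v; have := hno2 v; omega
  refine ⟨v, ?_⟩
  rcases hd with h3 | h4
  · exact Or.inl ⟨h3, by omega⟩
  · exact Or.inr ⟨h4, by omega⟩


end TurnRegular
end

section
/- Let T be a tree with maximum degree at most 4 and no vertex of degree 2, let v be a vertex of T, and let C be a connected component of the forest T − v that contains at least two vertices. Then C contains a vertex that is a 2-fork or a 3-fork of T. -/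
open SimpleGraph

namespace TurnRegular

section Helpers

variable {V : Type*} {G : SimpleGraph V}

lemma mem_compAway_self {v u : V} (h : u ≠ v) : u ∈ compAway G v u :=
  ⟨Walk.nil, by simp [Ne.symm h]⟩

lemma ne_of_mem_compAway {v u w : V} (h : w ∈ compAway G v u) : w ≠ v := by
  obtain ⟨p, hp⟩ := h
  intro hwv
  exact hp (hwv ▸ p.end_mem_support)

lemma compAway_adj {v u w y : V} (hw : w ∈ compAway G v u) (ha : G.Adj w y) (hy : y ≠ v) :
    y ∈ compAway G v u := by
  obtain ⟨p, hp⟩ := hw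
  refine ⟨p.concat ha, ?_⟩
  rw [Walk.support_concat]
  simp only [List.concat_eq_append, List.mem_append, List.mem_singleton]
  rintro (h | h)
  · exact hp h
  · exact hy h.symm

lemma dist_getVert_le (hc : G.Connected) {a b : V} (p : G.Walk a b) :
    ∀ i, G.dist a (p.getVert i) ≤ i := by
  induction p with
  | nil => intro i; simp [Walk.getVert, SimpleGraph.dist_self]
  | @cons a' b' c' h q ih =>
    intro i
    cases i with
    | zero => simp [SimpleGraph.dist_self]
    | succ n =>
      rw [Walk.getVert_cons_succ]
      have h1 : G.dist a' b' = 1 := SimpleGraph.dist_eq_one_iff_adj.mpr h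
      have h2 := ih n
      have h3 := hc.dist_triangle (u := a') (v := b') (w := q.getVert n)
      omega

lemma dist_getVert_eq (hc : G.Connected) {a b : V} (p : G.Walk a b)
    (hp : p.length = G.dist a b) {i : ℕ} (hi : i ≤ p.length) :
    G.dist a (p.getVert i) = i := by
  have hle := dist_getVert_le hc p i
  have h2 : G.dist (p.getVert i) b ≤ p.length - i := by
    have := dist_getVert_le hc p.reverse (p.length - i)
    rw [Walk.getVert_reverse] at this
    have hii : p.length - (p.length - i) = i := by omega
    rw [hii] at this
    rwa [SimpleGraph.dist_comm]
  have h3 : G.dist a b ≤ G.dist a (p.getVert i) + G.dist (p.getVert i) b := hc.dist_triangle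
  omega

lemma mem_support_dist_le (hc : G.Connected) {a b y : V} (p : G.Walk a b)
    (hp : p.length = G.dist a b) (hy : y ∈ p.support) : G.dist a y ≤ p.length := by
  obtain ⟨n, hny, hn⟩ := Walk.mem_support_iff_exists_getVert.mp hy
  have := dist_getVert_le hc p n
  rw [hny] at this
  omega

lemma concat_isPath {a b y : V} (p : G.Walk a b) (hp : p.IsPath) (h : G.Adj b y)
    (hy : y ∉ p.support) : (p.concat h).IsPath := by
  rw [Walk.isPath_def, Walk.support_concat]
  simp only [List.concat_eq_append, List.nodup_append, List.nodup_cons, List.not_mem_nil,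
    not_false_iff, List.nodup_nil, and_true, List.mem_singleton]
  refine ⟨hp.support_nodup, trivial, fun x hx hxy => ?_⟩
  intro hyy hxy; subst hyy
  subst hxy
  exact hy hx

lemma getVert_concat_length {a b y : V} (p : G.Walk a b) (h : G.Adj b y) :
    (p.concat h).getVert p.length = b := by
  rw [Walk.concat, Walk.getVert_append]
  simp

/-- parity: adjacent vertices in a tree have different distance to v. -/
lemma dist_ne_of_adj (ht : G.IsTree) (v : V) {x y : V} (hxy : G.Adj x y) :
    G.dist v x ≠ G.dist v y := by
  have hc := ht.isConnected
  intro he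
  obtain ⟨P, hP, hPl⟩ := (hc v x).exists_path_of_dist
  obtain ⟨Q, hQ, hQl⟩ := (hc v y).exists_path_of_dist
  have hyP : y ∉ P.support := by
    intro hmem
    obtain ⟨n, hny, hn⟩ := Walk.mem_support_iff_exists_getVert.mp hmem
    have hdn : G.dist v y ≤ n := hny ▸ dist_getVert_le hc P n
    have hnx : n ≠ P.length := by
      intro hh
      rw [hh, Walk.getVert_length] at hny
      exact hxy.ne hny
    omega
  have hP' : (P.concat hxy).IsPath := concat_isPath P hP hxy hyP
  have := (ht.existsUnique_path v y).unique hP' hQ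
  have hl : (P.concat hxy).length = Q.length := by rw [this]
  rw [Walk.length_concat] at hl
  omega

lemma dist_adj_cases (ht : G.IsTree) (v : V) {x y : V} (hxy : G.Adj x y) :
    G.dist v y = G.dist v x + 1 ∨ G.dist v x = G.dist v y + 1 := by
  have hc := ht.isConnected
  have h1 : G.dist v y ≤ G.dist v x + 1 := by
    have := hc.dist_triangle (v := x) (u := v) (w := y)
    have hd : G.dist x y = 1 := SimpleGraph.dist_eq_one_iff_adj.mpr hxy
    omega
  have h2 : G.dist v x ≤ G.dist v y + 1 := by
    have := hc.dist_triangle (v := y) (u := v) (w := x)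
    have hd : G.dist y x = 1 := SimpleGraph.dist_eq_one_iff_adj.mpr hxy.symm
    omega
  have := dist_ne_of_adj ht v hxy
  omega

/-- unique parent: a vertex has at most one neighbor strictly closer to v. -/
lemma unique_parent (ht : G.IsTree) (v : V) {x a b : V}
    (hxa : G.Adj x a) (hxb : G.Adj x b)
    (hda : G.dist v a < G.dist v x) (hdb : G.dist v b < G.dist v x) : a = b := by
  have hc := ht.isConnected
  have hma : G.dist v a = G.dist v x - 1 := by
    rcases dist_adj_cases ht v hxa with h | h <;> omega
  have hmb : G.dist v b = G.dist v x - 1 := by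
    rcases dist_adj_cases ht v hxb with h | h <;> omega
  set m := G.dist v x with hm
  obtain ⟨A, hA, hAl⟩ := (hc v a).exists_path_of_dist
  obtain ⟨B, hB, hBl⟩ := (hc v b).exists_path_of_dist
  have hxA : x ∉ A.support := by
    intro hmem
    have := mem_support_dist_le hc A hAl hmem
    omega
  have hxB : x ∉ B.support := by
    intro hmem
    have := mem_support_dist_le hc B hBl hmem
    omega
  have hA' : (A.concat hxa.symm).IsPath := concat_isPath A hA hxa.symm hxA
  have hB' : (B.concat hxb.symm).IsPath := concat_isPath B hB hxb.symm hxB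
  have heq := (ht.existsUnique_path v x).unique hA' hB'
  have h1 : (A.concat hxa.symm).getVert A.length = a := getVert_concat_length A hxa.symm
  have h2 : (B.concat hxb.symm).getVert B.length = b := getVert_concat_length B hxb.symm
  rw [heq] at h1
  have hlen : A.length = B.length := by omega
  rw [hlen] at h1
  exact h1.symm.trans h2

end Helpers

/-- Let `T` be a tree with maximum degree at most 4 and no vertex of degree 2,
let `v` be a vertex of `T`, and let `C` be a connected component of `T - v`
(here: the component containing a vertex `u ≠ v`) that contains at least two
vertices. Then `C` contains a vertex that is a 2-fork or a 3-fork of `T`. -/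
theorem stmt9 {V : Type*} [Fintype V] (G : SimpleGraph V)
    (htree : G.IsTree) (hdeg : ∀ w, deg G w ≤ 4) (hno2 : ∀ w, deg G w ≠ 2)
    (v u : V) (huv : u ≠ v) (hbig : 2 ≤ (compAway G v u).ncard) :
    ∃ w ∈ compAway G v u, IsKFork 2 G w ∨ IsKFork 3 G w := by
  classical
  have hc := htree.isConnected
  set C := compAway G v u with hCdef
  obtain ⟨x₀, hx₀C, hx₀max⟩ :=
    Set.exists_max_image C (fun x => G.dist v x) (Set.toFinite _) ⟨u, mem_compAway_self huv⟩
  set d := G.dist v x₀ with hd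
  have hx₀v : x₀ ≠ v := ne_of_mem_compAway hx₀C
  have hdpos : 1 ≤ d := by
    have : G.dist v x₀ ≠ 0 :=
      SimpleGraph.dist_ne_zero_iff_ne_and_reachable.mpr ⟨Ne.symm hx₀v, hc v x₀⟩
    omega
  -- every vertex of C at maximal distance is a leaf
  have hleaf : ∀ x ∈ C, G.dist v x = d → deg G x = 1 := by
    intro x hxC hxd
    have hxv : x ≠ v := ne_of_mem_compAway hxC
    obtain ⟨P, hP, hPl⟩ := (hc v x).exists_path_of_dist
    have hl1 : 1 ≤ P.length := by
      have : G.dist v x ≠ 0 :=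
        SimpleGraph.dist_ne_zero_iff_ne_and_reachable.mpr ⟨Ne.symm hxv, hc v x⟩
      omega
    have hadjp : G.Adj (P.getVert (P.length - 1)) x := by
      have h := P.adj_getVert_succ (i := P.length - 1) (by omega)
      rwa [show P.length - 1 + 1 = P.length by omega, Walk.getVert_length] at h
    have hdp : G.dist v (P.getVert (P.length - 1)) = P.length - 1 :=
      dist_getVert_eq hc P hPl (by omega)
    have hclose : ∀ y, G.Adj x y → G.dist v y < G.dist v x := by
      intro y hxy
      by_cases hyv : y = v
      · subst hyv; rw [SimpleGraph.dist_self]; omega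
      · have hyC : y ∈ C := compAway_adj hxC hxy hyv
        have h1 : G.dist v y ≤ d := hx₀max y hyC
        have h2 := dist_ne_of_adj htree v hxy
        omega
    have hsub : G.neighborSet x = {P.getVert (P.length - 1)} := by
      ext y
      simp only [mem_neighborSet, Set.mem_singleton_iff]
      constructor
      · intro hy
        refine unique_parent htree v hy hadjp.symm (hclose y hy) ?_
        have := hclose _ hadjp.symm
        exact this
      · rintro rfl; exact hadjp.symm
    rw [deg, hsub, Set.ncard_singleton]
  -- the penultimate vertex on a shortest path to x₀
  obtain ⟨P, hP, hPl⟩ := (hc v x₀).exists_path_of_dist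
  have hpl : P.length = d := hPl
  set p := P.getVert (d - 1) with hpdef
  have hadj : G.Adj p x₀ := by
    have h := P.adj_getVert_succ (i := d - 1) (by omega)
    rwa [show d - 1 + 1 = P.length by omega, Walk.getVert_length] at h
  have hdp : G.dist v p = d - 1 := dist_getVert_eq hc P hpl (by omega)
  by_cases hpv : p = v
  · -- then d = 1 and C = {x₀}, contradicting |C| ≥ 2
    exfalso
    have hd1 : d = 1 := by rw [hpv, SimpleGraph.dist_self] at hdp; omega
    obtain ⟨x₁, hx₁C, hx₁ne⟩ := Set.exists_ne_of_one_lt_ncard (show 1 < C.ncard by omega) x₀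
    obtain ⟨q0, hq0⟩ : ∃ p0 : G.Walk u x₀, v ∉ p0.support := id hx₀C
    obtain ⟨q1, hq1⟩ : ∃ p1 : G.Walk u x₁, v ∉ p1.support := id hx₁C
    set W : G.Walk x₀ x₁ := q0.reverse.append q1 with hW
    have hWs : v ∉ W.support := by
      rw [hW, Walk.mem_support_append_iff]
      rintro (h | h)
      · rw [Walk.support_reverse] at h
        exact hq0 (List.mem_reverse.mp h)
      · exact hq1 h
    have hWl : 0 < W.length := by
      rcases Nat.eq_zero_or_pos W.length with h | h
      · exact absurd (Walk.eq_of_length_eq_zero h) (Ne.symm hx₁ne)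
      · exact h
    have hy : G.Adj x₀ (W.getVert 1) := by
      have h := W.adj_getVert_succ (i := 0) hWl
      rwa [Walk.getVert_zero] at h
    have hyv : W.getVert 1 ≠ v := by
      intro h
      exact hWs (h ▸ Walk.mem_support_iff_exists_getVert.mpr ⟨1, rfl, by omega⟩)
    have hx₀leaf : deg G x₀ = 1 := hleaf x₀ hx₀C rfl
    have hvx₀ : G.Adj x₀ v := by rw [hpv] at hadj; exact hadj.symm
    obtain ⟨a, ha⟩ := Set.ncard_eq_one.mp hx₀leaf
    have h1 : v ∈ G.neighborSet x₀ := hvx₀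
    have h2 : W.getVert 1 ∈ G.neighborSet x₀ := hy
    rw [ha, Set.mem_singleton_iff] at h1 h2
    exact hyv (h2.trans h1.symm)
  · -- p is the desired fork
    have hpC : p ∈ C := compAway_adj hx₀C hadj.symm hpv
    have hd2 : 2 ≤ d := by
      have : G.dist v p ≠ 0 :=
        SimpleGraph.dist_ne_zero_iff_ne_and_reachable.mpr ⟨Ne.symm hpv, hc v p⟩
      omega
    have hcases : ∀ y, G.Adj p y → G.dist v y = d - 2 ∨ G.dist v y = d := by
      intro y hy
      rcases dist_adj_cases htree v hy with h | h
      · right; omega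
      · left; omega
    have hchildleaf : ∀ y, G.Adj p y → G.dist v y = d → deg G y = 1 := by
      intro y hy hyd
      have hyv : y ≠ v := by
        intro h; subst h; rw [SimpleGraph.dist_self] at hyd; omega
      exact hleaf y (compAway_adj hpC hy hyv) hyd
    have hq : G.Adj (P.getVert (d - 2)) p := by
      have h := P.adj_getVert_succ (i := d - 2) (by omega)
      rwa [show d - 2 + 1 = d - 1 by omega] at h
    have hqd : G.dist v (P.getVert (d - 2)) = d - 2 :=
      dist_getVert_eq hc P hpl (by omega)
    have hqx₀ : P.getVert (d - 2) ≠ x₀ := by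
      intro h; rw [h, ← hd] at hqd; omega
    have hdegp2 : 2 ≤ deg G p := by
      have hsub : ({P.getVert (d - 2), x₀} : Set V) ⊆ G.neighborSet p := by
        rintro y (rfl | rfl)
        · exact hq.symm
        · exact hadj
      calc 2 = ({P.getVert (d - 2), x₀} : Set V).ncard := (Set.ncard_pair hqx₀).symm
        _ ≤ (G.neighborSet p).ncard := Set.ncard_le_ncard hsub (Set.toFinite _)
    have hdegp : deg G p = 3 ∨ deg G p = 4 := by
      have h1 := hdeg p
      have h2 := hno2 p
      omega
    set N := G.neighborSet p with hN
    set T := {y ∈ N | G.dist v y < d - 1} with hT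
    have hTsub : T ⊆ N := Set.sep_subset _ _
    have hT1 : T.ncard ≤ 1 := by
      rw [Set.ncard_le_one_iff (Set.toFinite _)]
      rintro a b ⟨haN, haD⟩ ⟨hbN, hbD⟩
      exact unique_parent htree v haN hbN (by omega) (by omega)
    have hdiff : N \ T ⊆ {y | G.Adj p y ∧ deg G y = 1} := by
      rintro y ⟨hyN, hyT⟩
      have hy : G.Adj p y := hyN
      rcases hcases y hy with h | h
      · exact absurd ⟨hyN, by omega⟩ hyT
      · exact ⟨hy, hchildleaf y hy h⟩
    have hcnt1 : (N \ T).ncard = N.ncard - T.ncard := Set.ncard_diff hTsub (Set.toFinite _)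
    have hcnt2 : (N \ T).ncard ≤ {y | G.Adj p y ∧ deg G y = 1}.ncard :=
      Set.ncard_le_ncard hdiff (Set.toFinite _)
    have hdegN : deg G p = N.ncard := rfl
    have hcount : deg G p - 1 ≤ {y | G.Adj p y ∧ deg G y = 1}.ncard := by omega
    refine ⟨p, hpC, ?_⟩
    rcases hdegp with h3 | h4
    · exact Or.inl ⟨h3, by omega⟩
    · exact Or.inr ⟨h4, by omega⟩

end TurnRegular
end

section
/- If a tree T contains at least three distinct splitters, then T contains three distinct splitters x, y, z such that y lies on the (unique) path from x to z in T. -/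
open SimpleGraph

namespace TurnRegular

set_option linter.unusedSectionVars false
section Aux
variable {V : Type*} [Fintype V] {G : SimpleGraph V}

lemma two_le_deg_s10 {n x y : V} (hx : G.Adj n x) (hy : G.Adj n y) (hxy : x ≠ y) :
    2 ≤ deg G n := by
  have hsub : ({x, y} : Set V) ⊆ G.neighborSet n := by
    intro z hz; rcases hz with h | h <;> simp_all [SimpleGraph.mem_neighborSet]
  calc 2 = ({x, y} : Set V).ncard := (Set.ncard_pair hxy).symm
    _ ≤ _ := Set.ncard_le_ncard hsub (Set.toFinite _)

lemma splitter_deg {v : V} (h : IsSplitter G v) : 2 ≤ deg G v := by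
  have hsub : {u | G.Adj v u ∧ 2 ≤ deg G u} ⊆ G.neighborSet v := fun z hz => hz.1
  have h2 := Set.ncard_le_ncard hsub (Set.toFinite _)
  exact le_trans (by omega) (le_trans h h2)

/-- first vertex of a walk in a set S -/
lemma firstHit (S : Set V) : ∀ {c a : V} (q : G.Walk c a), a ∈ S →
    ∃ (m : V) (r : G.Walk c m) (r' : G.Walk m a), q = r.append r' ∧ m ∈ S ∧
      ∀ x ∈ r.support, x ∈ S → x = m := by
  intro c a q
  induction q with
  | nil =>
    intro ha
    exact ⟨_, Walk.nil, Walk.nil, rfl, ha, by simp⟩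
  | @cons u v w h t ih =>
    intro ha
    by_cases hu : u ∈ S
    · exact ⟨u, Walk.nil, Walk.cons h t, rfl, hu, by simp⟩
    · obtain ⟨m, r, r', heq, hm, hr⟩ := ih ha
      refine ⟨m, Walk.cons h r, r', by simp [heq], hm, ?_⟩
      intro x hx hxS
      rcases (by simpa using hx : x = u ∨ x ∈ r.support) with rfl | hx
      · exact absurd hxS hu
      · exact hr x hx hxS

lemma append_path {c m b : V} {r : G.Walk c m} {p : G.Walk m b}
    (hr : r.IsPath) (hp : p.IsPath) (h : ∀ x ∈ r.support, x ∈ p.support → x = m) :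
    (r.append p).IsPath := by
  rw [Walk.isPath_def, Walk.support_append]
  refine List.Nodup.append hr.support_nodup ?_ ?_
  · exact hp.support_nodup.tail
  · intro x hx hx'
    have hxm : x = m := h x hx (List.mem_of_mem_tail hx')
    subst hxm
    have := hp.support_nodup
    rw [p.support_eq_cons] at this
    exact (List.nodup_cons.mp this).1 hx'

lemma next_deg {m e : V} (q : G.Walk m e) (hq : q.IsPath) (hne : m ≠ e)
    (he : 2 ≤ deg G e) :
    ∃ n, G.Adj m n ∧ n ∈ q.support ∧ n ≠ m ∧ 2 ≤ deg G n := by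
  cases q with
  | nil => exact absurd rfl hne
  | cons h t =>
    rename_i v
    refine ⟨v, h, by simp [t.start_mem_support], (G.ne_of_adj h).symm, ?_⟩
    cases t with
    | nil => exact he
    | cons h' t' =>
      rename_i w'
      have hm : m ∉ (Walk.cons h' t').support := by
        have := hq.support_nodup
        rw [Walk.support_cons] at this
        exact (List.nodup_cons.mp this).1
      have hmv' : m ≠ w' := by
        intro hh; apply hm; rw [hh, Walk.support_cons]
        exact List.mem_cons_of_mem _ t'.start_mem_support
      exact two_le_deg_s10 h.symm h' hmv'
end Aux

/-- If a tree `T` contains at least three distinct splitters, then `T` contains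
three distinct splitters `x`, `y`, `z` such that `y` lies on the (unique) path
from `x` to `z` in `T`. -/
theorem stmt10 {V : Type*} [Fintype V] (G : SimpleGraph V)
    (htree : G.IsTree) (hsplit : 3 ≤ {v | IsSplitter G v}.ncard) :
    ∃ x y z, x ≠ y ∧ y ≠ z ∧ x ≠ z ∧
      IsSplitter G x ∧ IsSplitter G y ∧ IsSplitter G z ∧
      ∃ p : G.Walk x z, p.IsPath ∧ y ∈ p.support := by
  classical
  set S : Set V := {v | IsSplitter G v} with hSdef
  have hfin : S.Finite := Set.toFinite _
  obtain ⟨a, ha⟩ : S.Nonempty := Set.nonempty_of_ncard_ne_zero (by omega)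
  have h2 : 2 ≤ (S \ {a}).ncard := by
    rw [Set.ncard_diff_singleton_of_mem ha]; omega
  obtain ⟨b, hb⟩ : (S \ {a}).Nonempty := Set.nonempty_of_ncard_ne_zero (by omega)
  have h3 : 1 ≤ ((S \ {a}) \ {b}).ncard := by
    rw [Set.ncard_diff_singleton_of_mem hb]; omega
  obtain ⟨c, hc⟩ : ((S \ {a}) \ {b}).Nonempty := Set.nonempty_of_ncard_ne_zero (by omega)
  have haS : IsSplitter G a := ha
  have hbS : IsSplitter G b := hb.1
  have hcS : IsSplitter G c := hc.1.1
  have hba : b ≠ a := by simpa using hb.2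
  have hca : c ≠ a := by simpa using hc.1.2
  have hcb : c ≠ b := by simpa using hc.2
  obtain ⟨p, hp, -⟩ := htree.existsUnique_path a b
  obtain ⟨q, hq, -⟩ := htree.existsUnique_path c a
  obtain ⟨m, r, r', heq, hmS, hr⟩ :=
    firstHit {x | x ∈ p.support} q p.start_mem_support
  have hrp : r.IsPath := by rw [heq] at hq; exact hq.of_append_left
  have hmp : m ∈ p.support := hmS
  by_cases hmc : m = c
  · subst hmc
    exact ⟨a, m, b, fun h => hca h.symm, fun h => hcb h, hba.symm,
      haS, hcS, hbS, p, hp, hmp⟩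
  by_cases hma : m = a
  · subst hma
    have hP := append_path hrp hp hr
    refine ⟨c, m, b, hca, fun h => hba h.symm, hcb, hcS, haS, hbS, r.append p, hP, ?_⟩
    rw [Walk.support_append]; exact List.mem_append_left _ r.end_mem_support
  by_cases hmb : m = b
  · subst hmb
    have hr' : ∀ x ∈ r.support, x ∈ p.reverse.support → x = m := by
      intro x hx hx'
      exact hr x hx (by rwa [Walk.support_reverse, List.mem_reverse] at hx')
    have hP := append_path hrp hp.reverse hr'
    refine ⟨c, m, a, hcb, fun h => hma h, hca, hcS, hbS, haS,
      r.append p.reverse, hP, ?_⟩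
    rw [Walk.support_append]; exact List.mem_append_left _ r.end_mem_support
  -- main case: m is a new splitter between a and b
  set p1 := p.takeUntil m hmp with hp1def
  set p2 := p.dropUntil m hmp with hp2def
  have hspec := p.take_spec hmp
  have hp1 : p1.IsPath := hp.takeUntil hmp
  have hp2 : p2.IsPath := hp.dropUntil hmp
  obtain ⟨na, hna, hnas, hnam, hnad⟩ :=
    next_deg p1.reverse hp1.reverse hma (splitter_deg haS)
  obtain ⟨nb, hnb, hnbs, hnbm, hnbd⟩ :=
    next_deg p2 hp2 hmb (splitter_deg hbS)
  obtain ⟨nc, hnc, hncs, hncm, hncd⟩ :=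
    next_deg r.reverse hrp.reverse hmc (splitter_deg hcS)
  have hna_p1 : na ∈ p1.support := by
    rwa [Walk.support_reverse, List.mem_reverse] at hnas
  have hnc_r : nc ∈ r.support := by
    rwa [Walk.support_reverse, List.mem_reverse] at hncs
  have hnb_tail : nb ∈ p2.support.tail := by
    rw [p2.support_eq_cons] at hnbs
    rcases List.mem_cons.mp hnbs with h | h
    · exact absurd h hnbm
    · exact h
  have hdisj : p1.support.Disjoint p2.support.tail := by
    have hnd := hp.support_nodup
    rw [← hspec, Walk.support_append] at hnd
    exact List.disjoint_of_nodup_append hnd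
  have hnanb : na ≠ nb := fun h => hdisj hna_p1 (h ▸ hnb_tail)
  have hnc_notp : nc ∉ p.support := fun hmem => hncm (hr nc hnc_r hmem)
  have hna_p : na ∈ p.support := p.support_takeUntil_subset hmp hna_p1
  have hnb_p : nb ∈ p.support := p.support_dropUntil_subset hmp hnbs
  have hnanc : na ≠ nc := fun h => hnc_notp (h ▸ hna_p)
  have hnbnc : nb ≠ nc := fun h => hnc_notp (h ▸ hnb_p)
  have hm_split : IsSplitter G m := by
    have hsub : ({na, nb, nc} : Set V) ⊆ {u | G.Adj m u ∧ 2 ≤ deg G u} := by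
      intro z hz
      simp only [Set.mem_insert_iff, Set.mem_singleton_iff] at hz
      rcases hz with rfl | rfl | rfl
      exacts [⟨hna, hnad⟩, ⟨hnb, hnbd⟩, ⟨hnc, hncd⟩]
    have hcard : ({na, nb, nc} : Set V).ncard = 3 := by
      rw [Set.ncard_insert_of_notMem (by simp [hnanb, hnanc]),
        Set.ncard_insert_of_notMem (by simp [hnbnc]), Set.ncard_singleton]
    calc (3 : ℕ) = _ := hcard.symm
      _ ≤ _ := Set.ncard_le_ncard hsub (Set.toFinite _)
  exact ⟨a, m, b, fun h => hma h.symm, hmb, fun h => hba h.symm, haS, hm_split,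
    hbS, p, hp, hmp⟩


end TurnRegular
end
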